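/- arXiv:2510.03899 — 8 statements merged into one kernel-verified Lean document; each statement's English description precedes it below -/
import Mathlib

section
/- Let T = (V, E) be a finite tree, λ a temporal labeling of T, and t ∈ V. If t is temporally reachable from a node u in the induced temporal graph T_λ, then t is temporally reachable in T_λ from every node lying on the unique path in T from u to t. Consequently, the set of nodes from which t is temporally reachable in T_λ induces a connected subtree of T containing t. -/
/-- A temporal path from `u` to `w`: `p` temporal edges with strictly increasing
timestamps. -/
def IsTemporalPath {V : Type*} (E : Set (Sym2 V × ℕ)) (u w : V)
    (p : ℕ) (vtx : Fin (p + 1) → V) (ts : Fin p → ℕ) : Prop :=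
  vtx 0 = u ∧ vtx (Fin.last p) = w ∧ StrictMono ts ∧
    ∀ i : Fin p, (s(vtx i.castSucc, vtx i.succ), ts i) ∈ E

/-- `w` is temporally reachable from `u`. -/
def TemporallyReachable {V : Type*} (E : Set (Sym2 V × ℕ)) (u w : V) : Prop :=
  u = w ∨ ∃ (p : ℕ) (vtx : Fin (p + 1) → V) (ts : Fin p → ℕ),
    IsTemporalPath E u w p vtx ts

/-- The temporal edges of the temporal graph `G_λ` induced by a temporal labeling `lab`
of the static graph `G`. -/
def inducedTemporalEdges {V : Type*} (G : SimpleGraph V) (lab : Sym2 V → Finset ℕ) :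
    Set (Sym2 V × ℕ) :=
  {q | q.1 ∈ G.edgeSet ∧ q.2 ∈ lab q.1}

/-- Every vertex on a temporal path to `t` can temporally reach `t`. -/
lemma temporal_path_vertex_reachable {V : Type*} (E : Set (Sym2 V × ℕ)) {t : V} :
    ∀ (p : ℕ) (vtx : Fin (p + 1) → V) (ts : Fin p → ℕ) (u : V),
      IsTemporalPath E u t p vtx ts → ∀ k : Fin (p + 1), TemporallyReachable E (vtx k) t := by
  intro p
  induction p with
  | zero =>
    intro vtx ts u h k
    obtain ⟨h0, hl, _, _⟩ := h
    left
    have hk : k = 0 := Fin.fin_one_eq_zero k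
    rw [hk]
    have : (0 : Fin 1) = Fin.last 0 := rfl
    rw [this, hl]
  | succ n ih =>
    intro vtx ts u h k
    obtain ⟨h0, hl, hm, he⟩ := h
    -- the tail is a temporal path from `vtx 1` to `t`
    have htail : IsTemporalPath E (vtx 1) t n (vtx ∘ Fin.succ) (ts ∘ Fin.succ) := by
      refine ⟨rfl, ?_, hm.comp Fin.strictMono_succ, ?_⟩
      · show vtx (Fin.last n).succ = t
        rw [Fin.succ_last]; exact hl
      · intro i
        have := he i.succ
        simpa only [Function.comp_apply, Fin.succ_castSucc] using this
    induction k using Fin.cases with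
    | zero =>
      right
      exact ⟨n + 1, vtx, ts, h0 ▸ ⟨h0, hl, hm, he⟩⟩
    | succ j =>
      have := ih (vtx ∘ Fin.succ) (ts ∘ Fin.succ) (vtx 1) htail j
      simpa using this

/-- A sequence of adjacent vertices yields a walk whose support consists of those
vertices. -/
lemma exists_walk_of_chain {V : Type*} (T : SimpleGraph V) :
    ∀ (n : ℕ) (f : Fin (n + 1) → V),
      (∀ i : Fin n, T.Adj (f i.castSucc) (f i.succ)) →
      ∃ W : T.Walk (f 0) (f (Fin.last n)), ∀ v ∈ W.support, ∃ i, f i = v := by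
  intro n
  induction n with
  | zero =>
    intro f _
    refine ⟨(SimpleGraph.Walk.nil : T.Walk (f 0) (f 0)).copy rfl (by norm_num), ?_⟩
    intro v hv
    simp only [SimpleGraph.Walk.support_copy, SimpleGraph.Walk.support_nil,
      List.mem_singleton] at hv
    exact ⟨0, hv.symm⟩
  | succ n ih =>
    intro f hadj
    obtain ⟨W', hW'⟩ := ih (f ∘ Fin.succ) (fun i => by
      have := hadj i.succ
      simpa only [Function.comp_apply, Fin.succ_castSucc] using this)
    have hlast : (f ∘ Fin.succ) (Fin.last n) = f (Fin.last (n + 1)) := by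
      show f (Fin.last n).succ = _
      rw [Fin.succ_last]
    have hadj0 : T.Adj (f 0) ((f ∘ Fin.succ) 0) := by
      have := hadj 0
      simpa using this
    refine ⟨(SimpleGraph.Walk.cons hadj0 W').copy rfl hlast, ?_⟩
    intro v hv
    simp only [SimpleGraph.Walk.support_copy, SimpleGraph.Walk.support_cons,
      List.mem_cons] at hv
    rcases hv with rfl | hv
    · exact ⟨0, rfl⟩
    · obtain ⟨i, hi⟩ := hW' v hv
      exact ⟨i.succ, hi⟩

/-- Lifting a walk whose support lies in `S` to the induced subgraph. -/
lemma reachable_induce_of_walk {V : Type*} {T : SimpleGraph V} {S : Set V} :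
    ∀ {v w : V} (W : T.Walk v w) (hS : ∀ x ∈ W.support, x ∈ S),
      (SimpleGraph.induce S T).Reachable
        ⟨v, hS v W.start_mem_support⟩ ⟨w, hS w W.end_mem_support⟩ := by
  intro v w W
  induction W with
  | nil => intro hS; rfl
  | @cons a b c h q ih =>
    intro hS
    have hb : b ∈ S := hS b (by simp)
    have ha : a ∈ S := hS a (by simp)
    have hadj : (SimpleGraph.induce S T).Adj ⟨a, ha⟩ ⟨b, hb⟩ := by
      simp [SimpleGraph.comap_adj, h]
    exact (hadj.reachable).trans (ih (fun x hx => hS x (by simp [hx])))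

/-- in a finite tree `T` with temporal labeling `lab` and node `t`, if `t`
is temporally reachable from `u` in `T_λ`, then `t` is temporally reachable from every
node on the unique path from `u` to `t`; consequently the set of nodes from which `t` is
temporally reachable contains `t` and induces a connected subtree of `T`. -/
theorem tree_reachable_set_connected {V : Type*} [Fintype V] (T : SimpleGraph V)
    (hT : T.IsTree) (lab : Sym2 V → Finset ℕ) (t : V) :
    (∀ u : V, TemporallyReachable (inducedTemporalEdges T lab) u t →
      ∀ (W : T.Walk u t), W.IsPath →
        ∀ v ∈ W.support, TemporallyReachable (inducedTemporalEdges T lab) v t) ∧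
    t ∈ {v : V | TemporallyReachable (inducedTemporalEdges T lab) v t} ∧
    (SimpleGraph.induce {v : V | TemporallyReachable (inducedTemporalEdges T lab) v t}
      T).IsTree := by
  classical
  set E := inducedTemporalEdges T lab with hE
  set S := {v : V | TemporallyReachable E v t} with hS
  have part1 : ∀ u : V, TemporallyReachable E u t →
      ∀ (W : T.Walk u t), W.IsPath → ∀ v ∈ W.support, TemporallyReachable E v t := by
    intro u hu W hW v hv
    rcases hu with rfl | ⟨p, vtx, ts, hpath⟩
    · rw [SimpleGraph.Walk.isPath_iff_eq_nil.mp hW] at hv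
      simp only [SimpleGraph.Walk.support_nil, List.mem_singleton] at hv
      exact Or.inl hv
    · obtain ⟨W', hW'⟩ := exists_walk_of_chain T p vtx (fun i =>
        (SimpleGraph.mem_edgeSet T).mp (hpath.2.2.2 i).1)
      have h0 := hpath.1
      have hl := hpath.2.1
      let W'' : T.Walk u t := W'.copy h0 hl
      have hpaths : (⟨W, hW⟩ : T.Path u t) = ⟨W''.bypass, W''.bypass_isPath⟩ :=
        hT.IsAcyclic.path_unique _ _
      have hv' : v ∈ W''.bypass.support := by
        have := congrArg (fun P : T.Path u t => (P : T.Walk u t)) hpaths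
        simp only at this
        rw [this] at hv
        exact hv
      have hv'' : v ∈ W''.support := SimpleGraph.Walk.support_bypass_subset _ hv'
      have hv''' : v ∈ W'.support := by
        simpa [W'', SimpleGraph.Walk.support_copy] using hv''
      obtain ⟨i, hi⟩ := hW' v hv'''
      have := temporal_path_vertex_reachable E p vtx ts u hpath i
      rwa [hi] at this
  have htS : t ∈ S := Or.inl rfl
  refine ⟨part1, htS, ?_⟩
  -- reaching `t` inside the induced graph from any vertex of `S`
  have key : ∀ a : S, (SimpleGraph.induce S T).Reachable a ⟨t, htS⟩ := by
    rintro ⟨a, ha⟩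
    obtain ⟨W⟩ := hT.isConnected.preconnected a t
    have hsupp : ∀ x ∈ W.bypass.support, x ∈ S :=
      fun x hx => part1 a ha W.bypass W.bypass_isPath x hx
    have := reachable_induce_of_walk W.bypass hsupp
    exact this
  have : Nonempty S := ⟨⟨t, htS⟩⟩
  refine ⟨⟨fun a b => (key a).trans (key b).symm⟩, ?_⟩
  intro v c hc
  let emb : SimpleGraph.induce S T ↪g T := SimpleGraph.Embedding.induce S
  have := hc.map (f := emb.toHom) emb.injective
  exact hT.IsAcyclic _ this
end

section
/- Let T = (V, E) be a finite tree rooted at t with height H, and let S be a connected subtree of T containing t. Define the temporal labeling λ that assigns to each edge of S joining a node at depth d ≥ 1 to its parent at depth d − 1 the single timestamp H − d + 1, and the empty set to every other edge of T. Then λ has cost |λ| equal to the number of edges of S, and in the induced temporal graph T_λ the root t is temporally reachable from every node of S. -/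
open SimpleGraph in
private lemma tree_path_length {V : Type*} {T : SimpleGraph V} (hT : T.IsTree) {u w : V}
    (p : T.Walk u w) (hp : p.IsPath) : p.length = T.dist u w := by
  obtain ⟨q, hq, hlen⟩ := hT.isConnected.exists_path_of_dist u w
  have h := hT.IsAcyclic.path_unique ⟨p, hp⟩ ⟨q, hq⟩
  have : p = q := congrArg Subtype.val h
  rw [this, hlen]

open SimpleGraph in
private lemma getVert_mem_support' {V : Type*} {G : SimpleGraph V} {u w : V}
    (p : G.Walk u w) (i : ℕ) : p.getVert i ∈ p.support := by
  induction p generalizing i with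
  | nil => cases i <;> simp [Walk.getVert]
  | cons h q ih =>
    cases i with
    | zero => simp [Walk.getVert]
    | succ i => rw [Walk.getVert_cons_succ]; simp [ih]

open SimpleGraph in
private lemma tree_getVert_dist {V : Type*} {T : SimpleGraph V} (hT : T.IsTree) {t : V} :
    ∀ {u : V} (p : T.Walk u t), p.IsPath → ∀ i, T.dist (p.getVert i) t = p.length - i := by
  intro u p
  induction p with
  | nil =>
    intro _ i
    cases i <;> simp [SimpleGraph.Walk.getVert, SimpleGraph.dist_self]
  | cons h q ih =>
    intro hp i
    cases i with
    | zero =>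
      simpa using (tree_path_length hT _ hp).symm
    | succ i =>
      rw [SimpleGraph.Walk.getVert_cons_succ, ih hp.of_cons i,
        SimpleGraph.Walk.length_cons, Nat.succ_sub_succ]

/-- let `T` be a finite tree rooted at `t` of height `H` (depth of a node
`v` is `T.dist v t`), and let `s` be (the vertex set of) a connected subtree of `T`
containing `t`.  The labeling `lab` assigns to each edge of the subtree joining a node at
depth `d ≥ 1` to its parent at depth `d - 1` (so the deeper endpoint has depth
`d = max` of the two endpoint depths) the single timestamp `H - d + 1`, and `∅` to every
other edge.  Then the cost of `lab` equals the number of edges of the subtree, and in the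
induced temporal graph the root `t` is temporally reachable from every node of `s`. -/
theorem subtree_labeling_cost_and_reach {V : Type*} [Fintype V] [DecidableEq V]
    (T : SimpleGraph V) [DecidableRel T.Adj] (hT : T.IsTree) (t : V) (H : ℕ)
    (hH : ∀ v : V, T.dist v t ≤ H) (hHmax : ∃ v : V, T.dist v t = H)
    (s : Finset V) (hts : t ∈ s)
    (hconn : (SimpleGraph.induce (s : Set V) T).Connected)
    (lab : Sym2 V → Finset ℕ)
    (hlab₁ : ∀ e ∈ T.edgeSet, (∀ x ∈ e, x ∈ s) →
      lab e = {H - Sym2.lift ⟨fun x y => max (T.dist x t) (T.dist y t),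
        fun x y => max_comm _ _⟩ e + 1})
    (hlab₂ : ∀ e : Sym2 V, (e ∉ T.edgeSet ∨ ¬(∀ x ∈ e, x ∈ s)) → lab e = ∅) :
    (∑ e ∈ T.edgeFinset, (lab e).card)
        = Set.ncard {e : Sym2 V | e ∈ T.edgeSet ∧ ∀ x ∈ e, x ∈ s} ∧
    ∀ v ∈ s, TemporallyReachable (inducedTemporalEdges T lab) v t := by
  classical
  constructor
  · have hcongr : ∀ e ∈ T.edgeFinset,
        (lab e).card = if (∀ x ∈ e, x ∈ s) then 1 else 0 := by
      intro e he
      rw [SimpleGraph.mem_edgeFinset] at he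
      by_cases h : ∀ x ∈ e, x ∈ s
      · rw [if_pos h, hlab₁ e he h]; simp
      · rw [if_neg h, hlab₂ e (Or.inr h)]; simp
    rw [Finset.sum_congr rfl hcongr, ← Finset.card_filter]
    have hset : {e : Sym2 V | e ∈ T.edgeSet ∧ ∀ x ∈ e, x ∈ s}
        = ↑(T.edgeFinset.filter (fun e => ∀ x ∈ e, x ∈ s)) := by
      ext e
      simp [SimpleGraph.mem_edgeFinset]
    rw [hset, Set.ncard_coe_finset]
  · intro v hv
    -- get a path in T from v to t with support in s
    obtain ⟨w0⟩ := hconn ⟨v, hv⟩ ⟨t, hts⟩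
    set w1 : T.Walk v t := w0.map (SimpleGraph.Embedding.induce (s : Set V)).toHom with hw1
    have hsup1 : ∀ x ∈ w1.support, x ∈ s := by
      intro x hx
      have hx' : x ∈ w0.support.map (SimpleGraph.Embedding.induce (G := T) (s : Set V)).toHom := by
        rw [← SimpleGraph.Walk.support_map]; exact hx
      rw [List.mem_map] at hx'
      obtain ⟨⟨y, hy⟩, _, rfl⟩ := hx'
      exact hy
    set p : T.Walk v t := w1.bypass with hp
    have hpath : p.IsPath := SimpleGraph.Walk.bypass_isPath w1
    have hsup : ∀ x ∈ p.support, x ∈ s := fun x hx =>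
      hsup1 x (SimpleGraph.Walk.support_bypass_subset w1 hx)
    set k : ℕ := p.length with hk
    have hkH : k ≤ H := by
      rw [hk, tree_path_length hT p hpath]; exact hH v
    have hdist : ∀ i : ℕ, T.dist (p.getVert i) t = k - i :=
      fun i => tree_getVert_dist hT p hpath i
    have hmem : ∀ i : ℕ, p.getVert i ∈ s := fun i => hsup _ (getVert_mem_support' p i)
    right
    refine ⟨k, fun i => p.getVert i.val, fun i => H - k + i.val + 1, ?_, ?_, ?_, ?_⟩
    · simp
    · simp [Fin.last, hk]
    · intro a b hab
      have : (a : ℕ) < b := hab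
      show H - k + (a : ℕ) + 1 < H - k + (b : ℕ) + 1
      omega
    · intro i
      have hilt : (i : ℕ) < k := i.isLt
      have hadj : T.Adj (p.getVert i.val) (p.getVert (i.val + 1)) :=
        p.adj_getVert_succ hilt
      have hedge : s(p.getVert i.val, p.getVert (i.val + 1)) ∈ T.edgeSet := hadj
      have hin : ∀ x ∈ s(p.getVert i.val, p.getVert (i.val + 1)), x ∈ s := by
        intro x hx
        rw [Sym2.mem_iff] at hx
        rcases hx with rfl | rfl
        · exact hmem _
        · exact hmem _
      constructor
      · simpa [Fin.castSucc, Fin.succ] using hedge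
      · have hl := hlab₁ _ hedge hin
        simp only [Fin.castSucc, Fin.succ, Fin.castAdd, Fin.castLE, Fin.val_mk]
        rw [hl]
        have h1 : T.dist (p.getVert i.val) t = k - i.val := hdist i.val
        have h2 : T.dist (p.getVert (i.val + 1)) t = k - (i.val + 1) := hdist (i.val + 1)
        show H - k + (i : ℕ) + 1 ∈
          ({H - (T.dist (p.getVert i.val) t ⊔ T.dist (p.getVert (i.val + 1)) t) + 1} : Finset ℕ)
        rw [h1, h2, max_eq_left (by omega), Finset.mem_singleton]
        omega
end

section
/- For every node v of T, the exact label set L_v computed by the bottom-up dynamic program satisfies: (i) for every label (b, r, c) ∈ L_v there exists a v-subtree S with b(S) = b, r(S) = r, and w(S) = c; and (ii) for every v-subtree S there exists a label (b(S), r(S), c) ∈ L_v with c ≤ w(S). -/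
/-- A DP label `(b, r, c)`: counts of blue and red nodes covered, and cost. -/
abbrev DPLabel : Type := ℕ × ℕ × ℝ

/-- A finite tree rooted at `root`, given by a parent function together with a depth
function certifying acyclicity. -/
structure FMLTree (V : Type*) where
  root : V
  parent : V → V
  depth : V → ℕ
  parent_root : parent root = root
  depth_root : depth root = 0
  depth_parent : ∀ v, v ≠ root → depth (parent v) + 1 = depth v

/-- The children of `v`. -/
def FMLTree.children {V : Type*} [Fintype V] [DecidableEq V]
    (T : FMLTree V) (v : V) : Finset V :=
  Finset.univ.filter fun u => u ≠ T.root ∧ T.parent u = v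

/-- `x` lies in the subtree `T_v` rooted at `v` (i.e. `v` is an ancestor of `x`). -/
def FMLTree.IsDesc {V : Type*} (T : FMLTree V) (v x : V) : Prop :=
  ∃ k : ℕ, T.parent^[k] x = v

/-- A `v`-subtree: a connected subgraph of `T_v` containing `v`, given by its vertex
set `S`. -/
def IsVSubtree {V : Type*} (T : FMLTree V) (v : V) (S : Finset V) : Prop :=
  v ∈ S ∧ (∀ x ∈ S, T.IsDesc v x) ∧ ∀ x ∈ S, x ≠ v → T.parent x ∈ S

/-- `b(S)`: the number of blue nodes of `S` (`col x = some true` means blue,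
`col x = some false` means red, `col x = none` means uncolored). -/
def blueCount {V : Type*} [DecidableEq V] (col : V → Option Bool) (S : Finset V) : ℕ :=
  (S.filter fun x => col x = some true).card

/-- `r(S)`: the number of red nodes of `S`. -/
def redCount {V : Type*} [DecidableEq V] (col : V → Option Bool) (S : Finset V) : ℕ :=
  (S.filter fun x => col x = some false).card

/-- `w(S)`: the total weight of the edges of a `v`-subtree `S`, where `w x` is the weight
of the edge joining `x` to its parent. -/
def subtreeWeight {V : Type*} [DecidableEq V] (w : V → ℝ) (v : V) (S : Finset V) : ℝ :=
  ∑ x ∈ S.erase v, w x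

/-- The candidate labels at node `v`, formed from label sets `L u` at the children `u`
of `v`: choose for each child either nothing or one label `(b_u, r_u, c_u) ∈ L u`,
contributing `(b_u, r_u, c_u + w({v,u}))`, sum the chosen contributions coordinatewise,
and add `(1,0,0)` if `v` is blue and `(0,1,0)` if `v` is red. -/
def candidates {V : Type*} [Fintype V] [DecidableEq V] (T : FMLTree V)
    (col : V → Option Bool) (w : V → ℝ) (L : V → Set DPLabel) (v : V) : Set DPLabel :=
  { l | ∃ choice : V → Option DPLabel,
      (∀ u, u ∉ T.children v → choice u = none) ∧
      (∀ u l', choice u = some l' → l' ∈ L u) ∧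
      l.1 = (∑ u ∈ T.children v, ((choice u).map Prod.fst).getD 0)
              + (if col v = some true then 1 else 0) ∧
      l.2.1 = (∑ u ∈ T.children v, ((choice u).map fun l' => l'.2.1).getD 0)
              + (if col v = some false then 1 else 0) ∧
      l.2.2 = ∑ u ∈ T.children v, ((choice u).map fun l' => l'.2.2 + w u).getD 0 }

/-- `L` is the family of exact label sets computed by the bottom-up dynamic program:
at every node `v`, every label of `L v` is a candidate; among the candidates with the
same pair `(b, r)` only one of minimum cost is retained; and every candidate is
dominated by a retained label with the same `(b, r)` and no larger cost. -/
def IsExactDP {V : Type*} [Fintype V] [DecidableEq V] (T : FMLTree V)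
    (col : V → Option Bool) (w : V → ℝ) (L : V → Set DPLabel) : Prop :=
  ∀ v : V,
    L v ⊆ candidates T col w L v ∧
    (∀ l ∈ L v, ∀ l' ∈ candidates T col w L v,
      l'.1 = l.1 → l'.2.1 = l.2.1 → l.2.2 ≤ l'.2.2) ∧
    (∀ l' ∈ candidates T col w L v,
      ∃ l ∈ L v, l.1 = l'.1 ∧ l.2.1 = l'.2.1 ∧ l.2.2 ≤ l'.2.2)

namespace FMLTree
variable {V : Type*} (T : FMLTree V)

lemma iterate_root (k : ℕ) : T.parent^[k] T.root = T.root := by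
  induction k with
  | zero => rfl
  | succ k ih => rw [Function.iterate_succ_apply, T.parent_root, ih]

lemma depth_of_iterate : ∀ (k : ℕ) (x u : V), T.parent^[k] x = u → u ≠ T.root →
    T.depth x = T.depth u + k := by
  intro k
  induction k with
  | zero => intro x u h _; subst h; rfl
  | succ k ih =>
    intro x u h hu
    rw [Function.iterate_succ_apply] at h
    have hx : x ≠ T.root := by
      rintro rfl
      rw [T.parent_root, T.iterate_root] at h
      exact hu h.symm
    have := ih (T.parent x) u h hu
    have := T.depth_parent x hx
    omega

lemma mem_children {v u : V} [Fintype V] [DecidableEq V] :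
    u ∈ T.children v ↔ u ≠ T.root ∧ T.parent u = v := by
  simp [children]

lemma depth_child {v u : V} [Fintype V] [DecidableEq V] (h : u ∈ T.children v) :
    T.depth u = T.depth v + 1 := by
  rw [mem_children] at h
  have := T.depth_parent u h.1
  rw [h.2] at this
  omega

lemma desc_unique [Fintype V] [DecidableEq V] {v u u' x : V} (hu : u ∈ T.children v)
    (hu' : u' ∈ T.children v) (h : T.IsDesc u x) (h' : T.IsDesc u' x) : u = u' := by
  obtain ⟨k, hk⟩ := h
  obtain ⟨k', hk'⟩ := h'
  have d1 := T.depth_of_iterate k x u hk ((T.mem_children.1 hu).1)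
  have d2 := T.depth_of_iterate k' x u' hk' ((T.mem_children.1 hu').1)
  have e1 := T.depth_child hu
  have e2 := T.depth_child hu'
  have : k = k' := by omega
  rw [← hk, ← hk', this]

lemma not_desc_child [Fintype V] [DecidableEq V] {v u : V} (hu : u ∈ T.children v) :
    ¬ T.IsDesc u v := by
  rintro ⟨k, hk⟩
  have := T.depth_of_iterate k v u hk ((T.mem_children.1 hu).1)
  have := T.depth_child hu
  omega

lemma desc_of_child_desc [Fintype V] [DecidableEq V] {v u x : V} (hu : u ∈ T.children v)
    (h : T.IsDesc u x) : T.IsDesc v x := by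
  obtain ⟨k, hk⟩ := h
  exact ⟨k + 1, by rw [Function.iterate_succ_apply', hk, (T.mem_children.1 hu).2]⟩

lemma depth_iterate_le {v : V} : ∀ j, j ≤ T.depth v → T.depth (T.parent^[j] v) + j = T.depth v := by
  intro j
  induction j with
  | zero => simp
  | succ j ih =>
    intro hj
    have h1 := ih (by omega)
    have hne : T.parent^[j] v ≠ T.root := by
      intro he
      rw [he, T.depth_root] at h1
      omega
    have := T.depth_parent _ hne
    rw [Function.iterate_succ_apply']
    omega

lemma depth_lt_card [Fintype V] [DecidableEq V] (v : V) : T.depth v < Fintype.card V := by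
  have hinj : Set.InjOn (fun j => T.parent^[j] v) (Finset.range (T.depth v + 1)) := by
    intro i hi j hj hij
    simp only [Finset.coe_range, Set.mem_Iio] at hi hj
    have d1 := T.depth_iterate_le (v := v) i (by omega)
    have d2 := T.depth_iterate_le (v := v) j (by omega)
    simp only at hij
    rw [hij] at d1
    omega
  have := Finset.card_le_card_of_injOn _ (fun a _ => Finset.mem_univ _) hinj
  simpa using this

end FMLTree

section Aux
variable {V : Type*} [Fintype V] [DecidableEq V]

/-- counting over a disjoint decomposition -/
lemma count_decomp (v : V) (s : Finset V) (g : V → Finset V)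
    (hvg : ∀ u ∈ s, v ∉ g u) (hdisj : ∀ u ∈ s, ∀ u' ∈ s, u ≠ u' → Disjoint (g u) (g u'))
    (p : V → Prop) [DecidablePred p] :
    ((insert v (s.biUnion g)).filter p).card
      = (∑ u ∈ s, ((g u).filter p).card) + (if p v then 1 else 0) := by
  have hvB : v ∉ s.biUnion g := by
    intro h
    obtain ⟨u, hu, h'⟩ := Finset.mem_biUnion.1 h
    exact hvg u hu h'
  have hbi : ((s.biUnion g).filter p).card = ∑ u ∈ s, ((g u).filter p).card := by
    rw [Finset.filter_biUnion]
    exact Finset.card_biUnion fun u hu u' hu' hne =>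
      Finset.disjoint_filter_filter (hdisj u hu u' hu' hne)
  rw [Finset.filter_insert]
  split_ifs with hp
  · rw [Finset.card_insert_of_notMem (fun h => hvB (Finset.mem_filter.1 h).1), hbi]
  · rw [hbi]; omega

lemma weight_decomp (w : V → ℝ) (v : V) (s : Finset V) (g : V → Finset V)
    (hvg : ∀ u ∈ s, v ∉ g u) (hdisj : ∀ u ∈ s, ∀ u' ∈ s, u ≠ u' → Disjoint (g u) (g u'))
    (hug : ∀ u ∈ s, u ∈ g u) :
    subtreeWeight w v (insert v (s.biUnion g)) = ∑ u ∈ s, (subtreeWeight w u (g u) + w u) := by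
  have hvB : v ∉ s.biUnion g := by
    intro h
    obtain ⟨u, hu, h'⟩ := Finset.mem_biUnion.1 h
    exact hvg u hu h'
  rw [subtreeWeight, Finset.erase_insert hvB, Finset.sum_biUnion]
  · refine Finset.sum_congr rfl fun u hu => ?_
    rw [subtreeWeight, Finset.sum_erase_add _ _ (hug u hu)]
  · intro u hu u' hu' hne
    exact hdisj u hu u' hu' hne

end Aux

/-- for every node `v` of `T`, the exact label set `L v` satisfies:
(i) every label `(b, r, c) ∈ L v` is realized by a `v`-subtree `S` with `b(S) = b`,
`r(S) = r`, `w(S) = c`; and (ii) for every `v`-subtree `S` there is a label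
`(b(S), r(S), c) ∈ L v` with `c ≤ w(S)`. -/
theorem exactDP_correct {V : Type*} [Fintype V] [DecidableEq V] (T : FMLTree V)
    (col : V → Option Bool) (w : V → ℝ) (hw : ∀ u, u ≠ T.root → 1 ≤ w u)
    (L : V → Set DPLabel) (hL : IsExactDP T col w L) (v : V) :
    (∀ l ∈ L v, ∃ S : Finset V, IsVSubtree T v S ∧
      blueCount col S = l.1 ∧ redCount col S = l.2.1 ∧ subtreeWeight w v S = l.2.2) ∧
    (∀ S : Finset V, IsVSubtree T v S →
      ∃ c : ℝ, c ≤ subtreeWeight w v S ∧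
        (blueCount col S, redCount col S, c) ∈ L v) := by
  classical
  suffices H : ∀ n (v : V), Fintype.card V ≤ T.depth v + n →
      (∀ l ∈ L v, ∃ S : Finset V, IsVSubtree T v S ∧
        blueCount col S = l.1 ∧ redCount col S = l.2.1 ∧ subtreeWeight w v S = l.2.2) ∧
      (∀ S : Finset V, IsVSubtree T v S →
        ∃ c : ℝ, c ≤ subtreeWeight w v S ∧
          (blueCount col S, redCount col S, c) ∈ L v) by
    exact H (Fintype.card V) v (by omega)
  intro n
  induction n with
  | zero =>
    intro v hv
    exact absurd (T.depth_lt_card v) (by omega)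
  | succ n IHn =>
    intro v hv
    have IH : ∀ u ∈ T.children v,
        (∀ l ∈ L u, ∃ S : Finset V, IsVSubtree T u S ∧
          blueCount col S = l.1 ∧ redCount col S = l.2.1 ∧ subtreeWeight w u S = l.2.2) ∧
        (∀ S : Finset V, IsVSubtree T u S →
          ∃ c : ℝ, c ≤ subtreeWeight w u S ∧
            (blueCount col S, redCount col S, c) ∈ L u) := by
      intro u hu
      exact IHn u (by have := T.depth_child hu; omega)
    constructor
    · -- (i) every label is realized
      intro l hl
      obtain ⟨choice, h0, h1, hb, hr, hc⟩ := (hL v).1 hl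
      have key : ∀ u : V, ∃ S : Finset V, u ∈ T.children v → ∀ l', choice u = some l' →
          IsVSubtree T u S ∧ blueCount col S = l'.1 ∧ redCount col S = l'.2.1 ∧
            subtreeWeight w u S = l'.2.2 := by
        intro u
        by_cases hu : u ∈ T.children v
        · cases hcu : choice u with
          | none => exact ⟨∅, fun _ l' h' => by simp at h'⟩
          | some l' =>
            obtain ⟨S, hS⟩ := (IH u hu).1 l' (h1 u l' hcu)
            exact ⟨S, fun _ l'' h'' => by injection h'' with h''; subst h''; exact hS⟩
        · exact ⟨∅, fun h => absurd h hu⟩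
      choose g hg using key
      set chosen := (T.children v).filter (fun u => (choice u).isSome) with hchdef
      have hsub : chosen ⊆ T.children v := Finset.filter_subset _ _
      have hprops : ∀ u ∈ chosen, ∃ l', choice u = some l' ∧ IsVSubtree T u (g u) ∧
          blueCount col (g u) = l'.1 ∧ redCount col (g u) = l'.2.1 ∧
          subtreeWeight w u (g u) = l'.2.2 := by
        intro u hu
        obtain ⟨l', hl'⟩ := Option.isSome_iff_exists.1 (Finset.mem_filter.1 hu).2
        exact ⟨l', hl', hg u (hsub hu) l' hl'⟩
      have hnone : ∀ u ∈ T.children v, u ∉ chosen → choice u = none := by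
        intro u hu hnu
        cases hcu : choice u with
        | none => rfl
        | some l' => exact absurd (Finset.mem_filter.2 ⟨hu, by simp [hcu]⟩) hnu
      have hdesc : ∀ u ∈ chosen, ∀ x ∈ g u, T.IsDesc u x := by
        intro u hu x hx
        obtain ⟨l', _, hsu, _⟩ := hprops u hu
        exact hsu.2.1 x hx
      have hvg : ∀ u ∈ chosen, v ∉ g u := fun u hu hv' =>
        T.not_desc_child (hsub hu) (hdesc u hu v hv')
      have hdisj : ∀ u ∈ chosen, ∀ u' ∈ chosen, u ≠ u' → Disjoint (g u) (g u') := by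
        intro u hu u' hu' hne
        refine Finset.disjoint_left.2 fun x hx hx' =>
          hne (T.desc_unique (hsub hu) (hsub hu') (hdesc u hu x hx) (hdesc u' hu' x hx'))
      have hug : ∀ u ∈ chosen, u ∈ g u := by
        intro u hu
        obtain ⟨l', _, hsu, _⟩ := hprops u hu
        exact hsu.1
      refine ⟨insert v (chosen.biUnion g), ?_, ?_, ?_, ?_⟩
      · refine ⟨Finset.mem_insert_self _ _, ?_, ?_⟩
        · intro x hx
          rcases Finset.mem_insert.1 hx with rfl | hx'
          · exact ⟨0, rfl⟩
          · obtain ⟨u, hu, hxu⟩ := Finset.mem_biUnion.1 hx'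
            exact T.desc_of_child_desc (hsub hu) (hdesc u hu x hxu)
        · intro x hx hxv
          rcases Finset.mem_insert.1 hx with rfl | hx'
          · exact absurd rfl hxv
          · obtain ⟨u, hu, hxu⟩ := Finset.mem_biUnion.1 hx'
            obtain ⟨l', _, hsu, _⟩ := hprops u hu
            by_cases hxu' : x = u
            · subst hxu'
              rw [(T.mem_children.1 (hsub hu)).2]
              exact Finset.mem_insert_self _ _
            · exact Finset.mem_insert_of_mem
                (Finset.mem_biUnion.2 ⟨u, hu, hsu.2.2 x hxu hxu'⟩)
      · -- blue
        rw [hb, blueCount, count_decomp v chosen g hvg hdisj,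
          ← Finset.sum_subset hsub (fun u hu hnu => by simp [hnone u hu hnu])]
        congr 1
        refine Finset.sum_congr rfl fun u hu => ?_
        obtain ⟨l', hcu, _, hbl, _, _⟩ := hprops u hu
        simpa [hcu, blueCount] using hbl
      · -- red
        rw [hr, redCount, count_decomp v chosen g hvg hdisj,
          ← Finset.sum_subset hsub (fun u hu hnu => by simp [hnone u hu hnu])]
        congr 1
        refine Finset.sum_congr rfl fun u hu => ?_
        obtain ⟨l', hcu, _, _, hrl, _⟩ := hprops u hu
        simpa [hcu, redCount] using hrl
      · -- weight
        rw [hc, weight_decomp w v chosen g hvg hdisj hug,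
          ← Finset.sum_subset hsub (fun u hu hnu => by simp [hnone u hu hnu])]
        refine Finset.sum_congr rfl fun u hu => ?_
        obtain ⟨l', hcu, _, _, _, hwl⟩ := hprops u hu
        simp [hcu, ← hwl]
    · -- (ii) every subtree is dominated
      intro S hS
      set chosen := (T.children v).filter (fun u => u ∈ S) with hchdef
      have hsub : chosen ⊆ T.children v := Finset.filter_subset _ _
      set g : V → Finset V := fun u => S.filter (fun x => T.IsDesc u x) with hgdef
      have hSu : ∀ u ∈ chosen, IsVSubtree T u (g u) := by
        intro u hu
        have huc : u ∈ T.children v := hsub hu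
        have huS : u ∈ S := (Finset.mem_filter.1 hu).2
        refine ⟨Finset.mem_filter.2 ⟨huS, ⟨0, rfl⟩⟩, fun x hx => (Finset.mem_filter.1 hx).2, ?_⟩
        intro x hx hxu
        obtain ⟨hxS, k, hk⟩ := Finset.mem_filter.1 hx
        have hk0 : k ≠ 0 := by rintro rfl; exact hxu hk
        have hxv : x ≠ v := by rintro rfl; exact T.not_desc_child huc ⟨k, hk⟩
        refine Finset.mem_filter.2 ⟨hS.2.2 x hxS hxv, ⟨k - 1, ?_⟩⟩
        have hkk : k - 1 + 1 = k := by omega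
        rw [← Function.iterate_succ_apply, Nat.succ_eq_add_one, hkk]
        exact hk
      have hdesc : ∀ u ∈ chosen, ∀ x ∈ g u, T.IsDesc u x :=
        fun u hu x hx => (Finset.mem_filter.1 hx).2
      have hvg : ∀ u ∈ chosen, v ∉ g u := fun u hu hv' =>
        T.not_desc_child (hsub hu) (hdesc u hu v hv')
      have hdisj : ∀ u ∈ chosen, ∀ u' ∈ chosen, u ≠ u' → Disjoint (g u) (g u') := by
        intro u hu u' hu' hne
        refine Finset.disjoint_left.2 fun x hx hx' =>
          hne (T.desc_unique (hsub hu) (hsub hu') (hdesc u hu x hx) (hdesc u' hu' x hx'))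
      have hug : ∀ u ∈ chosen, u ∈ g u := fun u hu => (hSu u hu).1
      have find_child : ∀ x ∈ S, x ≠ v → ∃ u, u ∈ chosen ∧ T.IsDesc u x := by
        intro x hx hxv
        obtain ⟨k, hk⟩ := hS.2.1 x hx
        have hex : ∃ k, T.parent^[k] x = v := ⟨k, hk⟩
        have hk₀ : T.parent^[Nat.find hex] x = v := Nat.find_spec hex
        have hpos : 0 < Nat.find hex := by
          rcases Nat.eq_zero_or_pos (Nat.find hex) with h0 | h0
          · rw [h0] at hk₀; exact absurd hk₀ hxv
          · exact h0
        have hmem : ∀ j, j ≤ Nat.find hex → T.parent^[j] x ∈ S := by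
          intro j
          induction j with
          | zero => intro _; simpa using hx
          | succ j ih =>
            intro hj
            have h1 : T.parent^[j] x ∈ S := ih (by omega)
            have h2 : T.parent^[j] x ≠ v := Nat.find_min hex (by omega)
            rw [Function.iterate_succ_apply']
            exact hS.2.2 _ h1 h2
        set u := T.parent^[Nat.find hex - 1] x with hudef
        have hpu : T.parent u = v := by
          have hkk : Nat.find hex - 1 + 1 = Nat.find hex := by omega
          have h1 : T.parent^[Nat.find hex - 1 + 1] x
              = T.parent (T.parent^[Nat.find hex - 1] x) :=
            Function.iterate_succ_apply' _ _ _
          rw [hudef, ← h1, hkk]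
          exact hk₀
        have huv : u ≠ v := Nat.find_min hex (by omega)
        have hur : u ≠ T.root := by
          intro h
          rw [h, T.parent_root] at hpu
          exact huv (h.trans hpu)
        refine ⟨u, Finset.mem_filter.2 ⟨T.mem_children.2 ⟨hur, hpu⟩, ?_⟩,
          ⟨Nat.find hex - 1, rfl⟩⟩
        exact hmem _ (by omega)
      have hEq : S = insert v (chosen.biUnion g) := by
        ext x
        constructor
        · intro hx
          by_cases hxv : x = v
          · subst hxv; exact Finset.mem_insert_self _ _
          · obtain ⟨u, hu, hdx⟩ := find_child x hx hxv
            exact Finset.mem_insert_of_mem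
              (Finset.mem_biUnion.2 ⟨u, hu, Finset.mem_filter.2 ⟨hx, hdx⟩⟩)
        · intro hx
          rcases Finset.mem_insert.1 hx with rfl | hx'
          · exact hS.1
          · obtain ⟨u, hu, hxu⟩ := Finset.mem_biUnion.1 hx'
            exact (Finset.mem_filter.1 hxu).1
      -- choose labels at children
      have key2 : ∀ u : V, ∃ c : ℝ, u ∈ chosen →
          c ≤ subtreeWeight w u (g u) ∧
          (blueCount col (g u), redCount col (g u), c) ∈ L u := by
        intro u
        by_cases hu : u ∈ chosen
        · obtain ⟨c, hc1, hc2⟩ := (IH u (hsub hu)).2 (g u) (hSu u hu)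
          exact ⟨c, fun _ => ⟨hc1, hc2⟩⟩
        · exact ⟨0, fun h => absurd h hu⟩
      choose c hc using key2
      set choice : V → Option DPLabel := fun u =>
        if u ∈ chosen then some (blueCount col (g u), redCount col (g u), c u) else none
        with hchoicedef
      have hcand : ((∑ u ∈ T.children v, ((choice u).map Prod.fst).getD 0)
              + (if col v = some true then 1 else 0),
            (∑ u ∈ T.children v, ((choice u).map fun l' => l'.2.1).getD 0)
              + (if col v = some false then 1 else 0),
            ∑ u ∈ T.children v, ((choice u).map fun l' => l'.2.2 + w u).getD 0)
          ∈ candidates T col w L v := by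
        refine ⟨choice, ?_, ?_, rfl, rfl, rfl⟩
        · intro u hu
          rw [hchoicedef]
          exact if_neg fun h => hu (hsub h)
        · intro u l' hl'
          rw [hchoicedef] at hl'
          by_cases hu : u ∈ chosen
          · simp only [if_pos hu, Option.some_inj] at hl'
            subst hl'
            exact (hc u hu).2
          · simp [if_neg hu] at hl'
      obtain ⟨l, hlL, hb, hr, hcle⟩ := (hL v).2.2 _ hcand
      obtain ⟨lb, lr, lc⟩ := l
      simp only at hb hr hcle
      -- sums over children reduce to sums over chosen
      have hbsum : (∑ u ∈ T.children v, ((choice u).map Prod.fst).getD 0)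
            = ∑ u ∈ chosen, blueCount col (g u) := by
        rw [← Finset.sum_subset hsub (fun u hu hnu => by simp [hchoicedef, hnu])]
        refine Finset.sum_congr rfl fun u hu => ?_
        simp [hchoicedef, hu]
      have hrsum : (∑ u ∈ T.children v, ((choice u).map fun l' => l'.2.1).getD 0)
            = ∑ u ∈ chosen, redCount col (g u) := by
        rw [← Finset.sum_subset hsub (fun u hu hnu => by simp [hchoicedef, hnu])]
        refine Finset.sum_congr rfl fun u hu => ?_
        simp [hchoicedef, hu]
      have hcsum : (∑ u ∈ T.children v, ((choice u).map fun l' => l'.2.2 + w u).getD 0)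
            = ∑ u ∈ chosen, (c u + w u) := by
        rw [← Finset.sum_subset hsub (fun u hu hnu => by simp [hchoicedef, hnu])]
        refine Finset.sum_congr rfl fun u hu => ?_
        simp [hchoicedef, hu]
      have hwS : subtreeWeight w v S = ∑ u ∈ chosen, (subtreeWeight w u (g u) + w u) := by
        rw [hEq]; exact weight_decomp w v chosen g hvg hdisj hug
      have hbS : blueCount col S
          = (∑ u ∈ chosen, blueCount col (g u)) + (if col v = some true then 1 else 0) := by
        rw [hEq, blueCount, count_decomp v chosen g hvg hdisj]; rfl
      have hrS : redCount col S
          = (∑ u ∈ chosen, redCount col (g u)) + (if col v = some false then 1 else 0) := by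
        rw [hEq, redCount, count_decomp v chosen g hvg hdisj]; rfl
      refine ⟨lc, ?_, ?_⟩
      · refine le_trans hcle ?_
        rw [hcsum, hwS]
        refine Finset.sum_le_sum fun u hu => ?_
        have := (hc u hu).1
        linarith
      · have h1 : blueCount col S = lb := by rw [hbS, ← hbsum]; exact hb.symm
        have h2 : redCount col S = lr := by rw [hrS, ← hrsum]; exact hr.symm
        rw [h1, h2]
        exact hlL
end

section
/- Fix ε > 0. For every node v of T at height h_v and every exact label (b, r, c) ∈ L_v, there exists a label (b', r', c') in the bucketed label set L'_v with c' ≤ c, b' ≥ b/(1+ε)^{h_v+1}, and r' ≥ r/(1+ε)^{h_v+1}. -/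
/-- The height `h_v` of the subtree `T_v` rooted at `v`. -/
noncomputable def FMLTree.heightOf {V : Type*} (T : FMLTree V) (v : V) : ℕ :=
  sSup {k : ℕ | ∃ x, T.IsDesc v x ∧ T.depth x = T.depth v + k}

/-- The bucket index of `x : ℕ`: `0` for `x = 0`, and otherwise the least `i ≥ 1` with
`x ≤ (1+ε)^i`. -/
noncomputable def bucketIndex (ε : ℝ) (x : ℕ) : ℕ :=
  if x = 0 then 0 else sInf {i : ℕ | 1 ≤ i ∧ (x : ℝ) ≤ (1 + ε) ^ i}

/-- `L'` is the family of bucketed label sets computed by the geometric-bucketing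
bottom-up dynamic program: candidates are formed exactly as in the exact DP but from the
bucketed label sets of the children, and for each pair of bucket indices only one
candidate of minimum cost is retained. -/
def IsBucketDP {V : Type*} [Fintype V] [DecidableEq V] (ε : ℝ) (T : FMLTree V)
    (col : V → Option Bool) (w : V → ℝ) (L' : V → Set DPLabel) : Prop :=
  ∀ v : V,
    L' v ⊆ candidates T col w L' v ∧
    (∀ l ∈ L' v, ∀ l' ∈ candidates T col w L' v,
      bucketIndex ε l'.1 = bucketIndex ε l.1 →
      bucketIndex ε l'.2.1 = bucketIndex ε l.2.1 → l.2.2 ≤ l'.2.2) ∧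
    (∀ l' ∈ candidates T col w L' v,
      ∃ l ∈ L' v, bucketIndex ε l.1 = bucketIndex ε l'.1 ∧
        bucketIndex ε l.2.1 = bucketIndex ε l'.2.1 ∧ l.2.2 ≤ l'.2.2)

section Helpers

variable {V : Type*} [Fintype V] [DecidableEq V]

lemma FMLTree.bddAbove_heightSet (T : FMLTree V) (v : V) :
    BddAbove {k : ℕ | ∃ x, T.IsDesc v x ∧ T.depth x = T.depth v + k} := by
  refine ⟨Finset.univ.sup T.depth, ?_⟩
  rintro k ⟨x, -, hx⟩
  have : T.depth x ≤ Finset.univ.sup T.depth := Finset.le_sup (Finset.mem_univ x)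
  omega

lemma FMLTree.zero_mem_heightSet (T : FMLTree V) (v : V) :
    0 ∈ {k : ℕ | ∃ x, T.IsDesc v x ∧ T.depth x = T.depth v + k} :=
  ⟨v, ⟨0, rfl⟩, by simp⟩

lemma FMLTree.height_child_lt (T : FMLTree V) {v u : V} (hu : u ∈ T.children v) :
    T.heightOf u < T.heightOf v := by
  obtain ⟨hne, hpar⟩ : u ≠ T.root ∧ T.parent u = v := by
    simpa [FMLTree.children] using hu
  have hmem : T.heightOf u ∈ {k : ℕ | ∃ x, T.IsDesc u x ∧ T.depth x = T.depth u + k} :=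
    Nat.sSup_mem ⟨0, T.zero_mem_heightSet u⟩ (T.bddAbove_heightSet u)
  obtain ⟨x, ⟨k, hk⟩, hdx⟩ := hmem
  have hdu : T.depth v + 1 = T.depth u := by
    rw [← hpar]; exact T.depth_parent u hne
  have hmem' : T.heightOf u + 1 ∈
      {k : ℕ | ∃ x, T.IsDesc v x ∧ T.depth x = T.depth v + k} := by
    refine ⟨x, ⟨k + 1, ?_⟩, by omega⟩
    rw [Function.iterate_succ_apply', hk, hpar]
  have h2 : T.heightOf u + 1 ≤ T.heightOf v := le_csSup (T.bddAbove_heightSet v) hmem'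
  omega

end Helpers

lemma bucketIndex_ratio {ε : ℝ} (hε : 0 < ε) {x y : ℕ}
    (h : bucketIndex ε y = bucketIndex ε x) : (x : ℝ) ≤ (1 + ε) * y := by
  rcases Nat.eq_zero_or_pos x with hx | hx
  · subst hx; push_cast; positivity
  have h1 : (1 : ℝ) < 1 + ε := by linarith
  have hxne : x ≠ 0 := hx.ne'
  have hxset : {i : ℕ | 1 ≤ i ∧ (x : ℝ) ≤ (1 + ε) ^ i}.Nonempty := by
    obtain ⟨n, hn⟩ := pow_unbounded_of_one_lt (x : ℝ) h1
    refine ⟨max n 1, le_max_right n 1, ?_⟩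
    exact le_trans hn.le (pow_le_pow_right₀ h1.le (le_max_left n 1))
  have hix : bucketIndex ε x = sInf {i : ℕ | 1 ≤ i ∧ (x : ℝ) ≤ (1 + ε) ^ i} := by
    rw [bucketIndex, if_neg hxne]
  have hximem := Nat.sInf_mem hxset
  set i := bucketIndex ε x with hi
  have hi1 : 1 ≤ i := by rw [hix] at *; exact hximem.1
  have hxle : (x : ℝ) ≤ (1 + ε) ^ i := by rw [hix] at *; exact hximem.2
  -- y is nonzero
  have hyne : y ≠ 0 := by
    intro hy0
    rw [hy0] at h
    simp [bucketIndex] at h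
    omega
  have hiy : bucketIndex ε y = sInf {i : ℕ | 1 ≤ i ∧ (y : ℝ) ≤ (1 + ε) ^ i} := by
    rw [bucketIndex, if_neg hyne]
  have hylb : ((1 : ℝ) + ε) ^ (i - 1) ≤ y := by
    rcases Nat.lt_or_ge (i - 1) 1 with hcase | hcase
    · have : i - 1 = 0 := by omega
      rw [this, pow_zero]
      exact_mod_cast Nat.one_le_iff_ne_zero.mpr hyne
    · have hnot : (i - 1) ∉ {j : ℕ | 1 ≤ j ∧ (y : ℝ) ≤ (1 + ε) ^ j} := by
        apply Nat.notMem_of_lt_sInf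
        rw [← hiy, h]
        omega
      simp only [Set.mem_setOf_eq, not_and, not_le] at hnot
      exact (hnot hcase).le
  calc (x : ℝ) ≤ (1 + ε) ^ i := hxle
    _ = (1 + ε) * (1 + ε) ^ (i - 1) := by
        rw [← pow_succ']
        congr 1
        omega
    _ ≤ (1 + ε) * y := by
        apply mul_le_mul_of_nonneg_left hylb (by linarith)

lemma step_lemma {V : Type*} [Fintype V] [DecidableEq V] {ε : ℝ} (hε : 0 < ε)
    (T : FMLTree V) (col : V → Option Bool) (w : V → ℝ) (L L' : V → Set DPLabel)
    (hL : IsExactDP T col w L) (hL' : IsBucketDP ε T col w L') (v : V)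
    (IH : ∀ u ∈ T.children v, ∀ m ∈ L u, ∃ m', m' ∈ L' u ∧
      m'.2.2 ≤ m.2.2 ∧ (m.1 : ℝ) ≤ (1 + ε) ^ T.heightOf v * m'.1 ∧
      (m.2.1 : ℝ) ≤ (1 + ε) ^ T.heightOf v * m'.2.1) :
    ∀ l ∈ L v, ∃ l' ∈ L' v, l'.2.2 ≤ l.2.2 ∧
      (l.1 : ℝ) / (1 + ε) ^ (T.heightOf v + 1) ≤ (l'.1 : ℝ) ∧
      (l.2.1 : ℝ) / (1 + ε) ^ (T.heightOf v + 1) ≤ (l'.2.1 : ℝ) := by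
  classical
  intro l hl
  obtain ⟨choice, hnone, hmemc, hb, hr, hc⟩ := (hL v).1 hl
  have hpe : (0 : ℝ) < 1 + ε := by linarith
  have hpow1 : (1 : ℝ) ≤ (1 + ε) ^ T.heightOf v := one_le_pow₀ (by linarith)
  set h := T.heightOf v with hh
  -- the approximate choice function
  set pick : V → DPLabel → Option DPLabel := fun u m =>
    if hcond : u ∈ T.children v ∧ m ∈ L u then
      some (Classical.choose (IH u hcond.1 m hcond.2)) else none with hpick
  set choice' : V → Option DPLabel := fun u => (choice u).bind (pick u) with hchoice'
  -- termwise comparison of contributions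
  have key : ∀ u ∈ T.children v,
      ((choice' u).map (fun m => m.2.2 + w u)).getD 0
          ≤ ((choice u).map (fun m => m.2.2 + w u)).getD 0 ∧
      ((((choice u).map Prod.fst).getD 0 : ℕ) : ℝ)
          ≤ (1 + ε) ^ h * ((((choice' u).map Prod.fst).getD 0 : ℕ) : ℝ) ∧
      ((((choice u).map (fun m => m.2.1)).getD 0 : ℕ) : ℝ)
          ≤ (1 + ε) ^ h * ((((choice' u).map (fun m => m.2.1)).getD 0 : ℕ) : ℝ) := by
    intro u hu
    cases hcu : choice u with
    | none => simp [hchoice', hcu]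
    | some m =>
      have hmL : m ∈ L u := hmemc u m hcu
      have hcond : u ∈ T.children v ∧ m ∈ L u := ⟨hu, hmL⟩
      have hch : choice' u = some (Classical.choose (IH u hcond.1 m hcond.2)) := by
        simp only [hchoice', hcu, Option.bind_some, hpick, dif_pos hcond]
      obtain ⟨hm'L, hcost, hbb, hrr⟩ := Classical.choose_spec (IH u hcond.1 m hcond.2)
      rw [hch]
      simp only [Option.map_some, Option.getD_some]
      exact ⟨by linarith, hbb, hrr⟩
  -- the approximate candidate
  set l' : DPLabel :=
    ((∑ u ∈ T.children v, ((choice' u).map Prod.fst).getD 0)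
        + (if col v = some true then 1 else 0),
     (∑ u ∈ T.children v, ((choice' u).map fun m => m.2.1).getD 0)
        + (if col v = some false then 1 else 0),
     ∑ u ∈ T.children v, ((choice' u).map fun m => m.2.2 + w u).getD 0) with hl'
  have hl'cand : l' ∈ candidates T col w L' v := by
    refine ⟨choice', ?_, ?_, rfl, rfl, rfl⟩
    · intro u hu
      simp [hchoice', hnone u hu]
    · intro u m' hm'
      simp only [hchoice', Option.bind_eq_some_iff] at hm'
      obtain ⟨m, hcu, hpk⟩ := hm'
      simp only [hpick] at hpk
      split_ifs at hpk with hcond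
      simp only [Option.some.injEq] at hpk
      subst hpk
      exact (Classical.choose_spec (IH u hcond.1 m hcond.2)).1
  have hcost' : l'.2.2 ≤ l.2.2 := by
    rw [hc]
    exact Finset.sum_le_sum fun u hu => (key u hu).1
  have hb' : (l.1 : ℝ) ≤ (1 + ε) ^ h * (l'.1 : ℝ) := by
    rw [hb, hl']
    push_cast
    rw [mul_add, Finset.mul_sum]
    apply add_le_add
    · exact Finset.sum_le_sum fun u hu => (key u hu).2.1
    · split_ifs <;> simp <;> linarith
  have hr' : (l.2.1 : ℝ) ≤ (1 + ε) ^ h * (l'.2.1 : ℝ) := by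
    rw [hr, hl']
    push_cast
    rw [mul_add, Finset.mul_sum]
    apply add_le_add
    · exact Finset.sum_le_sum fun u hu => (key u hu).2.2
    · split_ifs <;> simp <;> linarith
  obtain ⟨l'', hl''mem, hbi1, hbi2, hcost''⟩ := (hL' v).2.2 l' hl'cand
  refine ⟨l'', hl''mem, le_trans hcost'' hcost', ?_, ?_⟩
  · have hx : (l'.1 : ℝ) ≤ (1 + ε) * l''.1 := bucketIndex_ratio hε hbi1
    rw [div_le_iff₀ (by positivity)]
    calc (l.1 : ℝ) ≤ (1 + ε) ^ h * l'.1 := hb'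
      _ ≤ (1 + ε) ^ h * ((1 + ε) * l''.1) :=
          mul_le_mul_of_nonneg_left hx (by positivity)
      _ = (l''.1 : ℝ) * (1 + ε) ^ (h + 1) := by ring
  · have hx : (l'.2.1 : ℝ) ≤ (1 + ε) * l''.2.1 := bucketIndex_ratio hε hbi2
    rw [div_le_iff₀ (by positivity)]
    calc (l.2.1 : ℝ) ≤ (1 + ε) ^ h * l'.2.1 := hr'
      _ ≤ (1 + ε) ^ h * ((1 + ε) * l''.2.1) :=
          mul_le_mul_of_nonneg_left hx (by positivity)
      _ = (l''.2.1 : ℝ) * (1 + ε) ^ (h + 1) := by ring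

/-- fix `ε > 0`.  For every node `v` of `T` at height `h_v` and every exact
label `(b, r, c) ∈ L v`, the bucketed label set `L' v` contains a label `(b', r', c')`
with `c' ≤ c`, `b' ≥ b / (1+ε)^(h_v+1)` and `r' ≥ r / (1+ε)^(h_v+1)`. -/
theorem bucketDP_per_node_guarantee {V : Type*} [Fintype V] [DecidableEq V]
    (ε : ℝ) (hε : 0 < ε) (T : FMLTree V) (col : V → Option Bool) (w : V → ℝ)
    (hw : ∀ u, u ≠ T.root → 1 ≤ w u)
    (L L' : V → Set DPLabel) (hL : IsExactDP T col w L)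
    (hL' : IsBucketDP ε T col w L') (v : V) :
    ∀ l ∈ L v, ∃ l' ∈ L' v,
      l'.2.2 ≤ l.2.2 ∧
      (l.1 : ℝ) / (1 + ε) ^ (T.heightOf v + 1) ≤ (l'.1 : ℝ) ∧
      (l.2.1 : ℝ) / (1 + ε) ^ (T.heightOf v + 1) ≤ (l'.2.1 : ℝ) := by
  have hpe : (0 : ℝ) < 1 + ε := by linarith
  have main : ∀ n : ℕ, ∀ v : V, T.heightOf v ≤ n → ∀ l ∈ L v, ∃ l' ∈ L' v,
      l'.2.2 ≤ l.2.2 ∧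
      (l.1 : ℝ) / (1 + ε) ^ (T.heightOf v + 1) ≤ (l'.1 : ℝ) ∧
      (l.2.1 : ℝ) / (1 + ε) ^ (T.heightOf v + 1) ≤ (l'.2.1 : ℝ) := by
    intro n
    induction n with
    | zero =>
      intro v hv
      apply step_lemma hε T col w L L' hL hL' v
      intro u hu
      exact absurd (T.height_child_lt hu) (by omega)
    | succ n ih =>
      intro v hv
      apply step_lemma hε T col w L L' hL hL' v
      intro u hu m hm
      have h1 : T.heightOf u + 1 ≤ T.heightOf v := T.height_child_lt hu
      obtain ⟨m', hm', hcst, hbb, hrr⟩ := ih u (by omega) m hm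
      refine ⟨m', hm', hcst, ?_, ?_⟩
      · have hb2 : (m.1 : ℝ) ≤ (1 + ε) ^ (T.heightOf u + 1) * m'.1 := by
          rw [div_le_iff₀ (by positivity)] at hbb
          linarith [hbb]
        calc (m.1 : ℝ) ≤ (1 + ε) ^ (T.heightOf u + 1) * m'.1 := hb2
          _ ≤ (1 + ε) ^ T.heightOf v * m'.1 := by
              apply mul_le_mul_of_nonneg_right _ (by positivity)
              exact pow_le_pow_right₀ (by linarith) h1
      · have hr2 : (m.2.1 : ℝ) ≤ (1 + ε) ^ (T.heightOf u + 1) * m'.2.1 := by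
          rw [div_le_iff₀ (by positivity)] at hrr
          linarith [hrr]
        calc (m.2.1 : ℝ) ≤ (1 + ε) ^ (T.heightOf u + 1) * m'.2.1 := hr2
          _ ≤ (1 + ε) ^ T.heightOf v * m'.2.1 := by
              apply mul_le_mul_of_nonneg_right _ (by positivity)
              exact pow_le_pow_right₀ (by linarith) h1
  exact main (T.heightOf v) v le_rfl
end

section
/- Fix ε > 0 and let ξ = (1+ε)^{H+1}, where H is the height of T. Let B and R denote the sets of blue and red nodes of T, and let α ∈ [0, 1]. If (b_opt, r_opt, c_opt) ∈ L_t is an exact label at the root t with b_opt ≥ α·|B| and r_opt ≥ α·|R| and with minimum cost c_opt among all such labels, then there exists a label (b', r', c') in the bucketed label set L'_t at the root with (i) c' ≤ c_opt and (ii) b' ≥ b_opt/ξ ≥ (α·|B|)/ξ and r' ≥ r_opt/ξ ≥ (α·|R|)/ξ. -/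
/-- If two naturals have the same bucket index, each is at most `(1+ε)` times the other. -/
lemma bucket_le {ε : ℝ} (hε : 0 < ε) {x y : ℕ}
    (h : bucketIndex ε x = bucketIndex ε y) : (x : ℝ) ≤ (1 + ε) * y := by
  have h1 : (1:ℝ) < 1 + ε := by linarith
  rcases Nat.eq_zero_or_pos x with hx | hx
  · subst hx; push_cast; positivity
  have hSx : {i : ℕ | 1 ≤ i ∧ (x : ℝ) ≤ (1+ε)^i}.Nonempty := by
    obtain ⟨n, hn⟩ := pow_unbounded_of_one_lt (x : ℝ) h1
    exact ⟨max n 1, le_max_right _ _,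
      hn.le.trans (pow_le_pow_right₀ h1.le (le_max_left _ _))⟩
  have hbx : bucketIndex ε x = sInf {i : ℕ | 1 ≤ i ∧ (x:ℝ) ≤ (1+ε)^i} := by
    simp [bucketIndex, hx.ne']
  have hmemx : 1 ≤ bucketIndex ε x ∧ (x : ℝ) ≤ (1+ε)^(bucketIndex ε x) := by
    rw [hbx]; exact Nat.sInf_mem hSx
  have hy : y ≠ 0 := by
    intro hy0
    rw [h, hy0] at hmemx
    simp [bucketIndex] at hmemx
  have hby : bucketIndex ε y = sInf {i : ℕ | 1 ≤ i ∧ (y:ℝ) ≤ (1+ε)^i} := by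
    simp [bucketIndex, hy]
  set i := bucketIndex ε x with hi
  have hy1 : (1:ℝ) ≤ y := by exact_mod_cast Nat.one_le_iff_ne_zero.mpr hy
  rcases Nat.lt_or_ge i 2 with h2 | h2
  · have hieq : i = 1 := by omega
    calc (x : ℝ) ≤ (1+ε)^i := hmemx.2
      _ = (1+ε) * 1 := by rw [hieq]; ring
      _ ≤ (1+ε) * y := by nlinarith
  · have hnot : i - 1 ∉ {j : ℕ | 1 ≤ j ∧ (y:ℝ) ≤ (1+ε)^j} := by
      apply Nat.notMem_of_lt_sInf
      rw [← hby, ← h]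
      omega
    have hlt : (1+ε)^(i-1) < (y : ℝ) := by
      by_contra hc
      exact hnot ⟨by omega, le_of_not_gt hc⟩
    have hps : (1+ε)^i = (1+ε) * (1+ε)^(i-1) := by
      rw [← pow_succ']
      congr 1
      omega
    calc (x : ℝ) ≤ (1+ε)^i := hmemx.2
      _ = (1+ε) * (1+ε)^(i-1) := hps
      _ ≤ (1+ε) * y := by nlinarith
/-- The height set is nonempty. -/
lemma FMLTree.heightSet_nonempty {V : Type*} (T : FMLTree V) (v : V) :
    {k : ℕ | ∃ x, T.IsDesc v x ∧ T.depth x = T.depth v + k}.Nonempty :=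
  ⟨0, v, ⟨0, rfl⟩, by simp⟩

/-- The height set is bounded above. -/
lemma FMLTree.heightSet_bddAbove {V : Type*} [Fintype V] (T : FMLTree V) (v : V) :
    BddAbove {k : ℕ | ∃ x, T.IsDesc v x ∧ T.depth x = T.depth v + k} := by
  refine ⟨Finset.univ.sup T.depth, ?_⟩
  rintro k ⟨x, _, hx⟩
  have := Finset.le_sup (f := T.depth) (Finset.mem_univ x)
  omega

/-- A child's subtree height is strictly smaller. -/
lemma FMLTree.heightOf_child {V : Type*} [Fintype V] [DecidableEq V]
    (T : FMLTree V) {v u : V} (hu : u ∈ T.children v) :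
    T.heightOf u + 1 ≤ T.heightOf v := by
  have hu' : u ≠ T.root ∧ T.parent u = v := by
    simpa [FMLTree.children] using hu
  have hmem : ∃ x, T.IsDesc u x ∧ T.depth x = T.depth u + T.heightOf u :=
    Nat.sSup_mem (T.heightSet_nonempty u) (T.heightSet_bddAbove u)
  obtain ⟨x, ⟨k, hk⟩, hdx⟩ := hmem
  have hdu : T.depth v + 1 = T.depth u := by
    have := T.depth_parent u hu'.1
    rw [hu'.2] at this
    exact this
  have hx : T.IsDesc v x := ⟨k + 1, by
    rw [Function.iterate_succ_apply', hk, hu'.2]⟩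
  have : T.heightOf u + 1 ∈ {k : ℕ | ∃ x, T.IsDesc v x ∧ T.depth x = T.depth v + k} :=
    ⟨x, hx, by omega⟩
  exact le_csSup (T.heightSet_bddAbove v) this

/-- Main induction step: if children labels are approximable with factor `(1+ε)^n`,
then labels at `v` are approximable with factor `(1+ε)^(n+1)`. -/
lemma approx_step {V : Type*} [Fintype V] [DecidableEq V] {ε : ℝ} (hε : 0 < ε)
    (T : FMLTree V) (col : V → Option Bool) (w : V → ℝ)
    (L L' : V → Set DPLabel) (hL : IsExactDP T col w L) (hL' : IsBucketDP ε T col w L')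
    (n : ℕ) (v : V)
    (hkey : ∀ u ∈ T.children v, ∀ lu ∈ L u, ∃ lu' ∈ L' u,
      lu'.2.2 ≤ lu.2.2 ∧ (lu.1 : ℝ) ≤ (1+ε)^n * lu'.1 ∧ (lu.2.1 : ℝ) ≤ (1+ε)^n * lu'.2.1) :
    ∀ l ∈ L v, ∃ l' ∈ L' v, l'.2.2 ≤ l.2.2 ∧
      (l.1 : ℝ) ≤ (1+ε)^(n+1) * l'.1 ∧ (l.2.1 : ℝ) ≤ (1+ε)^(n+1) * l'.2.1 := by
  intro l hl
  obtain ⟨choice, hnone, hmemc, hb, hr, hc⟩ := (hL v).1 hl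
  have hk2 : ∀ u lu, ∃ lu', u ∈ T.children v → lu ∈ L u →
      lu' ∈ L' u ∧ lu'.2.2 ≤ lu.2.2 ∧ (lu.1:ℝ) ≤ (1+ε)^n * lu'.1 ∧
        (lu.2.1:ℝ) ≤ (1+ε)^n * lu'.2.1 := by
    intro u lu
    by_cases h : u ∈ T.children v ∧ lu ∈ L u
    · obtain ⟨lu', h1, h2⟩ := hkey u h.1 lu h.2
      exact ⟨lu', fun _ _ => ⟨h1, h2⟩⟩
    · exact ⟨lu, fun h1 h2 => absurd ⟨h1, h2⟩ h⟩
  choose pick hpick using hk2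
  set choice' : V → Option DPLabel := fun u => (choice u).map (pick u) with hchoice'
  set B : ℕ := (∑ u ∈ T.children v, ((choice' u).map Prod.fst).getD 0)
      + (if col v = some true then 1 else 0) with hB
  set R : ℕ := (∑ u ∈ T.children v, ((choice' u).map fun p => p.2.1).getD 0)
      + (if col v = some false then 1 else 0) with hR
  set C : ℝ := ∑ u ∈ T.children v, ((choice' u).map fun p => p.2.2 + w u).getD 0 with hC
  have hmem'' : ((B, R, C) : DPLabel) ∈ candidates T col w L' v := by
    refine ⟨choice', ?_, ?_, rfl, rfl, rfl⟩
    · intro u hu; simp [hchoice', hnone u hu]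
    · intro u l' hl'
      simp only [hchoice', Option.map_eq_some_iff] at hl'
      obtain ⟨lu, hcu, rfl⟩ := hl'
      have hu : u ∈ T.children v := by
        by_contra hu
        simp [hnone u hu] at hcu
      exact (hpick u lu hu (hmemc u lu hcu)).1
  obtain ⟨l', hl'mem, hbb, hbr, hcle⟩ := (hL' v).2.2 _ hmem''
  have hpow1 : (1:ℝ) ≤ 1 + ε := by linarith
  have hpown : (0:ℝ) < (1+ε)^n := by positivity
  have hone : (1:ℝ) ≤ (1+ε)^n := one_le_pow₀ hpow1
  have hcost : C ≤ l.2.2 := by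
    rw [hc]
    refine Finset.sum_le_sum fun u hu => ?_
    cases hcu : choice u with
    | none => simp [hchoice', hcu]
    | some lu =>
      simp only [hchoice', hcu, Option.map_some, Option.getD_some]
      exact add_le_add_left (hpick u lu hu (hmemc u lu hcu)).2.1 _
  have hBb : (l.1 : ℝ) ≤ (1+ε)^n * B := by
    rw [hb, hB]
    push_cast
    rw [mul_add, Finset.mul_sum]
    refine add_le_add (Finset.sum_le_sum fun u hu => ?_) ?_
    · cases hcu : choice u with
      | none => simp [hchoice', hcu]
      | some lu =>
        simp only [hchoice', hcu, Option.map_some, Option.getD_some]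
        exact (hpick u lu hu (hmemc u lu hcu)).2.2.1
    · split
      · simpa using hone
      · simp
  have hRr : (l.2.1 : ℝ) ≤ (1+ε)^n * R := by
    rw [hr, hR]
    push_cast
    rw [mul_add, Finset.mul_sum]
    refine add_le_add (Finset.sum_le_sum fun u hu => ?_) ?_
    · cases hcu : choice u with
      | none => simp [hchoice', hcu]
      | some lu =>
        simp only [hchoice', hcu, Option.map_some, Option.getD_some]
        exact (hpick u lu hu (hmemc u lu hcu)).2.2.2
    · split
      · simpa using hone
      · simp
  have hB' : (B : ℝ) ≤ (1+ε) * l'.1 := bucket_le hε hbb.symm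
  have hR' : (R : ℝ) ≤ (1+ε) * l'.2.1 := bucket_le hε hbr.symm
  refine ⟨l', hl'mem, hcle.trans hcost, ?_, ?_⟩
  · calc (l.1 : ℝ) ≤ (1+ε)^n * B := hBb
      _ ≤ (1+ε)^n * ((1+ε) * l'.1) := by
        exact mul_le_mul_of_nonneg_left hB' hpown.le
      _ = (1+ε)^(n+1) * l'.1 := by rw [pow_succ]; ring
  · calc (l.2.1 : ℝ) ≤ (1+ε)^n * R := hRr
      _ ≤ (1+ε)^n * ((1+ε) * l'.2.1) := by
        exact mul_le_mul_of_nonneg_left hR' hpown.le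
      _ = (1+ε)^(n+1) * l'.2.1 := by rw [pow_succ]; ring

/-- Every exact label is approximated by a bucketed label, losing a factor
`(1+ε)^(n+1)` where `n` bounds the subtree height. -/
lemma approx_lemma {V : Type*} [Fintype V] [DecidableEq V] {ε : ℝ} (hε : 0 < ε)
    (T : FMLTree V) (col : V → Option Bool) (w : V → ℝ)
    (L L' : V → Set DPLabel) (hL : IsExactDP T col w L) (hL' : IsBucketDP ε T col w L') :
    ∀ n : ℕ, ∀ v : V, T.heightOf v ≤ n → ∀ l ∈ L v, ∃ l' ∈ L' v, l'.2.2 ≤ l.2.2 ∧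
      (l.1 : ℝ) ≤ (1+ε)^(n+1) * l'.1 ∧ (l.2.1 : ℝ) ≤ (1+ε)^(n+1) * l'.2.1 := by
  intro n
  induction n with
  | zero =>
    intro v hv
    refine approx_step hε T col w L L' hL hL' 0 v ?_
    intro u hu
    exact absurd (T.heightOf_child hu) (by omega)
  | succ n ih =>
    intro v hv
    refine approx_step hε T col w L L' hL hL' (n+1) v ?_
    intro u hu
    have := T.heightOf_child hu
    exact ih u (by omega)

/-- fix `ε > 0` and let `ξ = (1+ε)^(H+1)` where `H` is the height of `T`.
Let `B` and `R` be the sets of blue and red nodes and `α ∈ [0,1]`.  If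
`(b_opt, r_opt, c_opt) ∈ L t` is an exact label at the root `t` with `b_opt ≥ α·|B|`,
`r_opt ≥ α·|R|` and minimum cost `c_opt` among all such labels, then the bucketed label
set `L' t` contains a label `(b', r', c')` with (i) `c' ≤ c_opt` and
(ii) `b' ≥ b_opt/ξ ≥ (α·|B|)/ξ` and `r' ≥ r_opt/ξ ≥ (α·|R|)/ξ`. -/
theorem bucketDP_root_guarantee {V : Type*} [Fintype V] [DecidableEq V]
    (ε : ℝ) (hε : 0 < ε) (T : FMLTree V) (col : V → Option Bool) (w : V → ℝ)
    (hw : ∀ u, u ≠ T.root → 1 ≤ w u)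
    (L L' : V → Set DPLabel) (hL : IsExactDP T col w L)
    (hL' : IsBucketDP ε T col w L')
    (α : ℝ) (hα0 : 0 ≤ α) (hα1 : α ≤ 1)
    (bopt ropt : ℕ) (copt : ℝ)
    (hmem : (bopt, ropt, copt) ∈ L T.root)
    (hbopt : α * ((Finset.univ.filter fun x => col x = some true).card : ℝ) ≤ (bopt : ℝ))
    (hropt : α * ((Finset.univ.filter fun x => col x = some false).card : ℝ) ≤ (ropt : ℝ))
    (hmin : ∀ l ∈ L T.root,
      α * ((Finset.univ.filter fun x => col x = some true).card : ℝ) ≤ (l.1 : ℝ) →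
      α * ((Finset.univ.filter fun x => col x = some false).card : ℝ) ≤ (l.2.1 : ℝ) →
      copt ≤ l.2.2) :
    ∃ l' ∈ L' T.root,
      l'.2.2 ≤ copt ∧
      (bopt : ℝ) / (1 + ε) ^ (T.heightOf T.root + 1) ≤ (l'.1 : ℝ) ∧
      α * ((Finset.univ.filter fun x => col x = some true).card : ℝ)
          / (1 + ε) ^ (T.heightOf T.root + 1)
        ≤ (bopt : ℝ) / (1 + ε) ^ (T.heightOf T.root + 1) ∧
      (ropt : ℝ) / (1 + ε) ^ (T.heightOf T.root + 1) ≤ (l'.2.1 : ℝ) ∧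
      α * ((Finset.univ.filter fun x => col x = some false).card : ℝ)
          / (1 + ε) ^ (T.heightOf T.root + 1)
        ≤ (ropt : ℝ) / (1 + ε) ^ (T.heightOf T.root + 1) := by
  obtain ⟨l', hm, hcost, hb, hr⟩ :=
    approx_lemma hε T col w L L' hL hL' (T.heightOf T.root) T.root le_rfl _ hmem
  have hξ : (0:ℝ) < (1 + ε) ^ (T.heightOf T.root + 1) := by positivity
  refine ⟨l', hm, hcost, ?_, ?_, ?_, ?_⟩
  · rw [div_le_iff₀ hξ]
    calc (bopt : ℝ) ≤ (1+ε)^(T.heightOf T.root + 1) * l'.1 := hb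
      _ = (l'.1 : ℝ) * (1+ε)^(T.heightOf T.root + 1) := by ring
  · exact div_le_div_of_nonneg_right hbopt hξ.le
  · rw [div_le_iff₀ hξ]
    calc (ropt : ℝ) ≤ (1+ε)^(T.heightOf T.root + 1) * l'.2.1 := hr
      _ = (l'.2.1 : ℝ) * (1+ε)^(T.heightOf T.root + 1) := by ring
  · exact div_le_div_of_nonneg_right hropt hξ.le
end

section
/- Let (V, 𝓔₁) and (V', 𝓔₂) be temporal graphs with V ⊆ V', and let K ∈ ℕ with K ≥ 1. Suppose that for every temporal edge ({u,v}, τ) ∈ 𝓔₁ there exist in (V', 𝓔₂) both a temporal path from u to v and a temporal path from v to u, all of whose timestamps lie in the interval ((τ−1)·K, τ·K]. Then for all u, x ∈ V, if x is temporally reachable from u in (V, 𝓔₁), then x is temporally reachable from u in (V', 𝓔₂). -/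
/-- Auxiliary list-based temporal path. -/
inductive LPath {V : Type*} (E : Set (Sym2 V × ℕ)) : V → V → List ℕ → Prop
  | nil (u : V) : LPath E u u []
  | cons {u v w : V} {t : ℕ} {l : List ℕ} :
      (s(u, v), t) ∈ E → LPath E v w l → (∀ s ∈ l, t < s) → LPath E u w (t :: l)

lemma finToL {V : Type*} (E : Set (Sym2 V × ℕ)) :
    ∀ (p : ℕ) (u w : V) (vtx : Fin (p + 1) → V) (ts : Fin p → ℕ),
      IsTemporalPath E u w p vtx ts → LPath E u w (List.ofFn ts) := by
  intro p
  induction p with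
  | zero =>
    intro u w vtx ts h
    obtain ⟨h0, hl, _, _⟩ := h
    have : u = w := by rw [← h0, ← hl]; rfl
    subst this
    simpa using LPath.nil u
  | succ n ih =>
    intro u w vtx ts h
    obtain ⟨h0, hl, hm, he⟩ := h
    have edge : (s(u, vtx ((0 : Fin (n+1)).succ)), ts 0) ∈ E := by
      have := he 0
      rwa [show (0 : Fin (n+1)).castSucc = 0 from rfl, h0] at this
    have tail : IsTemporalPath E (vtx ((0 : Fin (n+1)).succ)) w n
        (fun i => vtx i.succ) (fun i => ts i.succ) := by
      refine ⟨rfl, ?_, ?_, ?_⟩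
      · show vtx (Fin.last n).succ = w
        rw [Fin.succ_last]; exact hl
      · intro i j hij
        exact hm (Fin.succ_lt_succ_iff.mpr hij)
      · intro i
        have := he i.succ
        rwa [← Fin.succ_castSucc] at this
    have hlp := ih (vtx ((0 : Fin (n+1)).succ)) w _ _ tail
    rw [List.ofFn_succ]
    exact LPath.cons edge hlp (by
      intro s hs
      rw [List.mem_ofFn] at hs
      obtain ⟨i, rfl⟩ := hs
      exact hm (Fin.succ_pos i))

lemma LPath.append {V : Type*} {E : Set (Sym2 V × ℕ)} {u v w : V} {l₁ l₂ : List ℕ}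
    (h₁ : LPath E u v l₁) (h₂ : LPath E v w l₂)
    (hlt : ∀ s ∈ l₁, ∀ t ∈ l₂, s < t) : LPath E u w (l₁ ++ l₂) := by
  induction h₁ with
  | nil => simpa using h₂
  | @cons a b c t l hE htail hmono ih =>
    refine LPath.cons hE (ih h₂ fun s hs t' ht' => hlt s (List.mem_cons_of_mem _ hs) t' ht') ?_
    intro s hs
    rcases List.mem_append.mp hs with h | h
    · exact hmono s h
    · exact hlt t List.mem_cons_self s h

lemma lpath_reach {V : Type*} {E : Set (Sym2 V × ℕ)} {u w : V} {l : List ℕ}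
    (h : LPath E u w l) :
    u = w ∨ ∃ (p : ℕ) (vtx : Fin (p + 1) → V) (ts : Fin p → ℕ),
      IsTemporalPath E u w p vtx ts ∧ ∀ i, ts i ∈ l := by
  induction h with
  | nil => exact Or.inl rfl
  | @cons a b c t l hE htail hmono ih =>
    right
    rcases ih with rfl | ⟨p, vtx, ts, ⟨hp0, hpl, hpm, hpe⟩, hmem⟩
    · -- single edge
      refine ⟨1, ![a, b], ![t], ⟨rfl, rfl, ?_, ?_⟩, ?_⟩
      · intro i j hij; fin_cases i <;> fin_cases j <;> simp_all
      · intro i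
        fin_cases i
        simpa using hE
      · intro i; fin_cases i; simp
    · refine ⟨p + 1, Fin.cons a vtx, Fin.cons t ts, ⟨?_, ?_, ?_, ?_⟩, ?_⟩
      · simp
      · rw [← Fin.succ_last, Fin.cons_succ]; exact hpl
      · intro i j hij
        rcases Fin.eq_zero_or_eq_succ j with rfl | ⟨j', rfl⟩
        · exact absurd hij (by simp)
        · rcases Fin.eq_zero_or_eq_succ i with rfl | ⟨i', rfl⟩
          · simp only [Fin.cons_zero, Fin.cons_succ]
            exact hmono _ (hmem j')
          · simp only [Fin.cons_succ]
            exact hpm (Fin.succ_lt_succ_iff.mp hij)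
      · intro i
        rcases Fin.eq_zero_or_eq_succ i with rfl | ⟨i', rfl⟩
        · simp only [Fin.castSucc_zero, Fin.cons_zero, Fin.cons_succ, hp0]
          exact hE
        · rw [← Fin.succ_castSucc]
          simp only [Fin.cons_succ]
          exact hpe i'
      · intro i
        rcases Fin.eq_zero_or_eq_succ i with rfl | ⟨i', rfl⟩
        · simp
        · rw [Fin.cons_succ]
          exact List.mem_cons_of_mem _ (hmem i')

/-- let `(V, 𝓔₁)` and `(V', 𝓔₂)` be temporal graphs with `V ⊆ V'` and let
`K ≥ 1`.  If for every temporal edge `({u,v}, τ) ∈ 𝓔₁` there exist in `(V', 𝓔₂)` both a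
temporal path from `u` to `v` and one from `v` to `u`, all of whose timestamps lie in
`((τ-1)·K, τ·K]`, then temporal reachability in `(V, 𝓔₁)` implies temporal reachability
in `(V', 𝓔₂)`. -/
theorem simulation_preserves_reachability {V' : Type*} [Fintype V'] (Vs : Set V')
    (E₁ E₂ : Set (Sym2 V' × ℕ)) (K : ℕ) (hK : 1 ≤ K)
    (hVs : ∀ e ∈ E₁, ∀ x ∈ e.1, x ∈ Vs)
    (hloopfree : ∀ e ∈ E₁, ¬ e.1.IsDiag)
    (hpos : ∀ e ∈ E₁, 1 ≤ e.2)
    (hsim : ∀ a b : V', ∀ τ : ℕ, (s(a, b), τ) ∈ E₁ →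
      (∃ (p : ℕ) (vtx : Fin (p + 1) → V') (ts : Fin p → ℕ),
        IsTemporalPath E₂ a b p vtx ts ∧ ∀ i : Fin p, (τ - 1) * K < ts i ∧ ts i ≤ τ * K) ∧
      (∃ (p : ℕ) (vtx : Fin (p + 1) → V') (ts : Fin p → ℕ),
        IsTemporalPath E₂ b a p vtx ts ∧ ∀ i : Fin p, (τ - 1) * K < ts i ∧ ts i ≤ τ * K)) :
    ∀ u x : V', u ∈ Vs → x ∈ Vs →
      TemporallyReachable E₁ u x → TemporallyReachable E₂ u x := by
  -- simulation at the level of list paths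
  have key : ∀ (l : List ℕ) (u w : V'), LPath E₁ u w l →
      ∃ l', LPath E₂ u w l' ∧ ∀ s ∈ l', ∃ t ∈ l, (t - 1) * K < s ∧ s ≤ t * K := by
    intro l u w h
    induction h with
    | nil => exact ⟨[], LPath.nil _, by simp⟩
    | @cons a b c t l hE htail hmono ih =>
      obtain ⟨⟨p, vtx, ts, hpath, hbd⟩, -⟩ := hsim a b t hE
      obtain ⟨l₁, hl₁, hbd₁⟩ := ih
      have h₀ : LPath E₂ a b (List.ofFn ts) := finToL E₂ p a b vtx ts hpath
      refine ⟨List.ofFn ts ++ l₁, LPath.append h₀ hl₁ ?_, ?_⟩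
      · intro s hs t' ht'
        rw [List.mem_ofFn] at hs
        obtain ⟨i, rfl⟩ := hs
        obtain ⟨t₂, ht₂, hlb, -⟩ := hbd₁ t' ht'
        have htt₂ : t < t₂ := hmono t₂ ht₂
        have : t * K ≤ (t₂ - 1) * K := Nat.mul_le_mul_right K (by omega)
        have := (hbd i).2
        omega
      · intro s hs
        rcases List.mem_append.mp hs with h | h
        · rw [List.mem_ofFn] at h
          obtain ⟨i, rfl⟩ := h
          exact ⟨t, List.mem_cons_self, hbd i⟩
        · obtain ⟨t₂, ht₂, hh⟩ := hbd₁ s h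
          exact ⟨t₂, List.mem_cons_of_mem _ ht₂, hh⟩
  intro u x _ _ hr
  rcases hr with rfl | ⟨p, vtx, ts, hpath⟩
  · exact Or.inl rfl
  · have h₁ : LPath E₁ u x (List.ofFn ts) := finToL E₁ p u x vtx ts hpath
    obtain ⟨l', hl', -⟩ := key _ _ _ h₁
    rcases lpath_reach hl' with rfl | ⟨p', vtx', ts', hp', -⟩
    · exact Or.inl rfl
    · exact Or.inr ⟨p', vtx', ts', hp'⟩
end

section
/- Consider the set-cover gadget graph for an instance (U, 𝒮) with |U| = m and parameter L ≥ 1. If 𝒮' ⊆ 𝒮 is a subfamily of size ℓ whose union is U, then there exists a temporal labeling λ of the gadget graph of cost |λ| ≤ m + (L+1)·ℓ under which the terminal r is temporally reachable from every element node t_j. Explicitly: for each S_i ∈ 𝒮', label the L+1 chain edges {s_i, w_{i,1}}, {w_{i,1}, w_{i,2}}, …, {w_{i,L}, r} with the timestamps 2, 3, …, L+2 in order from s_i towards r; and for each j ∈ [m], choose some S_{i(j)} ∈ 𝒮' containing u_j and label the edge {t_j, s_{i(j)}} with timestamp 1. -/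
/-- The nodes of the set-cover gadget graph: the terminal `r`, a set node `s i` for each
`i ∈ [n]`, an element node `t j` for each `j ∈ [m]`, and chain nodes `w i k` for each
`i ∈ [n]` and `k : Fin L` (the node `w i k` represents the paper's `w_{i,k+1}`). -/
inductive GV (n m L : ℕ) : Type
  | r : GV n m L
  | s (i : Fin n) : GV n m L
  | t (j : Fin m) : GV n m L
  | w (i : Fin n) (k : Fin L) : GV n m L
  deriving DecidableEq, Fintype

/-- The edge set of the set-cover gadget graph: `{t j, s i}` whenever `u_j ∈ S_i`, and
for each `i` the `L+1` chain edges `{s_i, w_{i,1}}, {w_{i,1}, w_{i,2}}, …,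
{w_{i,L-1}, w_{i,L}}, {w_{i,L}, r}`. -/
def gadgetEdges (n m L : ℕ) (S : Fin n → Finset (Fin m)) : Set (Sym2 (GV n m L)) :=
  {e | (∃ i j, j ∈ S i ∧ e = s(GV.t j, GV.s i)) ∨
       (∃ (i : Fin n) (k : Fin L), (k : ℕ) = 0 ∧ e = s(GV.s i, GV.w i k)) ∨
       (∃ (i : Fin n) (k k' : Fin L), (k' : ℕ) = (k : ℕ) + 1 ∧
          e = s(GV.w i k, GV.w i k')) ∨
       (∃ (i : Fin n) (k : Fin L), (k : ℕ) = L - 1 ∧ e = s(GV.w i k, GV.r))}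

/-- The temporal edges induced by a temporal labeling `lab` of a static graph with edge
set `E`. -/
def inducedTemporal {V : Type*} (E : Set (Sym2 V)) (lab : Sym2 V → Finset ℕ) :
    Set (Sym2 V × ℕ) :=
  {q | q.1 ∈ E ∧ q.2 ∈ lab q.1}

/-- The cost `|λ|` of a temporal labeling: the total number of assigned timestamps. -/
def labCost {n m L : ℕ} (lab : Sym2 (GV n m L) → Finset ℕ) : ℕ :=
  ∑ e : Sym2 (GV n m L), (lab e).card

def decGV {n m L : ℕ} : GV n m L → GV n m L → ℕ ⊕ (Fin n × Fin (L + 1))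
  | GV.t j, GV.s _ => Sum.inl j
  | GV.s _, GV.t j => Sum.inl j
  | GV.s i, GV.w _ _ => Sum.inr (i, 0)
  | GV.w _ _, GV.s i => Sum.inr (i, 0)
  | GV.w i k, GV.w i' k' => Sum.inr (min i i', ⟨min (k : ℕ) (k' : ℕ) + 1,
      by have := k.isLt; have := k'.isLt; omega⟩)
  | GV.w i _, GV.r => Sum.inr (i, Fin.last L)
  | GV.r, GV.w i _ => Sum.inr (i, Fin.last L)
  | _, _ => Sum.inl 0

lemma decGV_symm {n m L : ℕ} (a b : GV n m L) : decGV a b = decGV b a := by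
  cases a <;> cases b <;> simp [decGV, min_comm, Nat.min_comm]

def fdec {n m L : ℕ} : Sym2 (GV n m L) → ℕ ⊕ (Fin n × Fin (L + 1)) :=
  Sym2.lift ⟨decGV, decGV_symm⟩

@[simp] lemma fdec_mk {n m L : ℕ} (a b : GV n m L) : fdec s(a, b) = decGV a b := rfl

/-- if `𝒮' ⊆ 𝒮` is a subfamily of size `ℓ` covering `U`, then the explicit
labeling (chain edges of each chosen set labeled `2, 3, …, L+2` in order from `s_i`
towards `r`, and for each element `j` the edge to a chosen covering set labeled `1`) has
cost at most `m + (L+1)·ℓ` and makes `r` temporally reachable from every element node. -/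
theorem setcover_gives_cheap_labeling (n m L : ℕ) (hL : 1 ≤ L)
    (S : Fin n → Finset (Fin m)) (hcover : ∀ j, ∃ i, j ∈ S i)
    (S' : Finset (Fin n)) (ℓ : ℕ) (hℓ : S'.card = ℓ)
    (hS' : ∀ j, ∃ i ∈ S', j ∈ S i)
    (ch : Fin m → Fin n) (hch : ∀ j, ch j ∈ S' ∧ j ∈ S (ch j)) :
    ∃ lab : Sym2 (GV n m L) → Finset ℕ,
      (∀ (e : Sym2 (GV n m L)) (τ : ℕ), τ ∈ lab e ↔
        ((τ = 1 ∧ ∃ j : Fin m, e = s(GV.t j, GV.s (ch j))) ∨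
         (∃ i ∈ S',
           (∃ k : Fin L, (k : ℕ) = 0 ∧ e = s(GV.s i, GV.w i k) ∧ τ = 2) ∨
           (∃ k k' : Fin L, (k' : ℕ) = (k : ℕ) + 1 ∧ e = s(GV.w i k, GV.w i k') ∧
              τ = (k : ℕ) + 3) ∨
           (∃ k : Fin L, (k : ℕ) = L - 1 ∧ e = s(GV.w i k, GV.r) ∧ τ = L + 2)))) ∧
      labCost lab ≤ m + (L + 1) * ℓ ∧
      ∀ j : Fin m, TemporallyReachable (inducedTemporal (gadgetEdges n m L S) lab)
        (GV.t j) GV.r := by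
  classical
  set P : Sym2 (GV n m L) → ℕ → Prop := fun e τ =>
    ((τ = 1 ∧ ∃ j : Fin m, e = s(GV.t j, GV.s (ch j))) ∨
     (∃ i ∈ S',
       (∃ k : Fin L, (k : ℕ) = 0 ∧ e = s(GV.s i, GV.w i k) ∧ τ = 2) ∨
       (∃ k k' : Fin L, (k' : ℕ) = (k : ℕ) + 1 ∧ e = s(GV.w i k, GV.w i k') ∧
          τ = (k : ℕ) + 3) ∨
       (∃ k : Fin L, (k : ℕ) = L - 1 ∧ e = s(GV.w i k, GV.r) ∧ τ = L + 2))) with hP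
  have hPlt : ∀ e τ, P e τ → τ < L + 3 := by
    intro e τ h
    rcases h with ⟨rfl, _⟩ | ⟨i, _, ⟨k, _, _, rfl⟩ | ⟨k, k', hk', _, rfl⟩ | ⟨k, _, _, rfl⟩⟩
    · omega
    · omega
    · have := k'.isLt; omega
    · omega
  set lab : Sym2 (GV n m L) → Finset ℕ :=
    fun e => (Finset.range (L + 3)).filter (fun τ => P e τ) with hlabdef
  have hlab : ∀ e τ, τ ∈ lab e ↔ P e τ := by
    intro e τ
    simp only [hlabdef, Finset.mem_filter, Finset.mem_range]
    exact ⟨fun h => h.2, fun h => ⟨hPlt e τ h, h⟩⟩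
  refine ⟨lab, fun e τ => hlab e τ, ?_, ?_⟩
  · -- cost bound
    have h1 : labCost lab = (Finset.univ.sigma fun e => lab e).card := by
      rw [labCost, Finset.card_sigma]
    have h2 : ((Finset.range m).disjSum
        (S' ×ˢ (Finset.univ : Finset (Fin (L + 1))))).card = m + (L + 1) * ℓ := by
      rw [Finset.card_disjSum, Finset.card_range, Finset.card_product, Finset.card_univ,
        Fintype.card_fin, hℓ, Nat.mul_comm]
    rw [h1, ← h2]
    apply Finset.card_le_card_of_injOn (fun q => fdec q.1)
    · rintro ⟨e, τ⟩ hq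
      simp only [Finset.mem_coe, Finset.mem_sigma, Finset.mem_univ, true_and] at hq
      rw [hlab] at hq
      rcases hq with ⟨rfl, j, rfl⟩ | ⟨i, hi, ⟨k, hk0, rfl, rfl⟩ | ⟨k, k', hk', rfl, rfl⟩
          | ⟨k, hk, rfl, rfl⟩⟩ <;>
        simp only [fdec_mk, decGV, min_self] <;>
        first
          | exact Finset.inl_mem_disjSum.mpr (Finset.mem_range.mpr j.isLt)
          | exact Finset.inr_mem_disjSum.mpr (Finset.mem_product.mpr ⟨hi, Finset.mem_univ _⟩)
    · rintro ⟨e, τ⟩ hq ⟨e', τ'⟩ hq' hf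
      simp only [Finset.mem_coe, Finset.mem_sigma, Finset.mem_univ, true_and] at hq hq'
      rw [hlab] at hq hq'
      simp only at hf
      rcases hq with ⟨rfl, j, rfl⟩ | ⟨i, hi, ⟨k, hk0, rfl, rfl⟩ | ⟨k, k', hk', rfl, rfl⟩
          | ⟨k, hk, rfl, rfl⟩⟩ <;>
        rcases hq' with ⟨rfl, j₂, rfl⟩ | ⟨i₂, hi₂, ⟨k₂, hk0₂, rfl, rfl⟩
          | ⟨k₂, k₂', hk'₂, rfl, rfl⟩ | ⟨k₂, hk₂, rfl, rfl⟩⟩ <;>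
        simp only [fdec_mk, decGV, min_self, reduceCtorEq, Sum.inl.injEq, Sum.inr.injEq,
          Prod.mk.injEq, Fin.mk.injEq, Fin.ext_iff, Fin.val_last, Fin.val_zero,
          Nat.reduceAdd] at hf
      · obtain rfl : j = j₂ := Fin.ext hf
        rfl
      · obtain rfl : i = i₂ := Fin.ext hf.1
        obtain rfl : k = k₂ := Fin.ext (by omega)
        rfl
      · exact absurd hf.2 not_false
      · exact absurd hf.2 (by omega)
      · exact absurd hf.2 not_false
      · obtain ⟨h1, h2⟩ := hf
        obtain rfl : i = i₂ := Fin.ext h1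
        obtain rfl : k = k₂ := Fin.ext (by omega)
        obtain rfl : k' = k₂' := Fin.ext (by omega)
        rfl
      · exfalso
        have hl1 := Fin.isLt k'
        have h2 := hf.2
        omega
      · exact absurd hf.2 (by omega)
      · exfalso
        have hl1 := Fin.isLt k₂'
        have h2 := hf.2
        omega
      · obtain rfl : i = i₂ := Fin.ext hf.1
        obtain rfl : k = k₂ := Fin.ext (by omega)
        rfl
  · -- reachability
    intro j
    right
    set i0 := ch j with hi0
    have hi0S : i0 ∈ S' := (hch j).1
    have hjS : j ∈ S i0 := (hch j).2
    set vtxN : ℕ → GV n m L := fun a =>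
      if a = 0 then GV.t j else if a = 1 then GV.s i0
      else if h : a ≤ L + 1 then GV.w i0 ⟨a - 2, by omega⟩ else GV.r with hvtxN
    refine ⟨L + 2, fun x => vtxN (x : ℕ), fun x => (x : ℕ) + 1, ?_, ?_, ?_, ?_⟩
    · simp [hvtxN]
    · simp only [Fin.val_last, hvtxN]
      rw [if_neg (by omega), if_neg (by omega), dif_neg (by omega)]
    · intro a b h
      exact Nat.succ_lt_succ h
    · intro x
      have hx : (x : ℕ) < L + 2 := x.isLt
      simp only [Fin.coe_castSucc, Fin.val_succ]
      by_cases h0 : (x : ℕ) = 0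
      · rw [h0]
        have e1 : vtxN 0 = GV.t j := by simp [hvtxN]
        have e2 : vtxN 1 = GV.s i0 := by simp [hvtxN]
        rw [e1, e2]
        exact ⟨Or.inl ⟨i0, j, hjS, rfl⟩, (hlab _ _).mpr (Or.inl ⟨rfl, j, rfl⟩)⟩
      · by_cases h1 : (x : ℕ) = 1
        · rw [h1]
          have e1 : vtxN 1 = GV.s i0 := by simp [hvtxN]
          have e2 : vtxN 2 = GV.w i0 ⟨0, by omega⟩ := by
            simp only [hvtxN]
            rw [if_neg (by omega), if_neg (by omega), dif_pos (by omega)]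
          rw [e1, e2]
          exact ⟨Or.inr (Or.inl ⟨i0, ⟨0, by omega⟩, rfl, rfl⟩),
            (hlab _ _).mpr (Or.inr ⟨i0, hi0S, Or.inl ⟨⟨0, by omega⟩, rfl, rfl, rfl⟩⟩)⟩
        · by_cases h2 : (x : ℕ) ≤ L
          · have e1 : vtxN (x : ℕ) = GV.w i0 ⟨(x : ℕ) - 2, by omega⟩ := by
              simp only [hvtxN]
              rw [if_neg h0, if_neg h1, dif_pos (by omega)]
            have e2 : vtxN ((x : ℕ) + 1) = GV.w i0 ⟨(x : ℕ) - 1, by omega⟩ := by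
              simp only [hvtxN]
              rw [if_neg (by omega), if_neg (by omega), dif_pos (by omega)]
              exact congrArg _ (Fin.ext (by simp only []; omega))
            rw [e1, e2]
            refine ⟨Or.inr (Or.inr (Or.inl ⟨i0, ⟨(x : ℕ) - 2, by omega⟩,
              ⟨(x : ℕ) - 1, by omega⟩, by simp only [Fin.val_mk] <;> omega, rfl⟩)),
              (hlab _ _).mpr (Or.inr ⟨i0, hi0S, Or.inr (Or.inl
                ⟨⟨(x : ℕ) - 2, by omega⟩, ⟨(x : ℕ) - 1, by omega⟩,
                  by simp only [Fin.val_mk] <;> omega, rfl, by simp only [Fin.val_mk] <;> omega⟩)⟩)⟩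
          · have hxe : (x : ℕ) = L + 1 := by omega
            have e1 : vtxN (x : ℕ) = GV.w i0 ⟨L - 1, by omega⟩ := by
              simp only [hvtxN]
              rw [if_neg h0, if_neg h1, dif_pos (by omega)]
              exact congrArg _ (Fin.ext (by simp only []; omega))
            have e2 : vtxN ((x : ℕ) + 1) = GV.r := by
              simp only [hvtxN]
              rw [if_neg (by omega), if_neg (by omega), dif_neg (by omega)]
            rw [e1, e2]
            refine ⟨Or.inr (Or.inr (Or.inr ⟨i0, ⟨L - 1, by omega⟩, by simp, rfl⟩)),
              (hlab _ _).mpr (Or.inr ⟨i0, hi0S, Or.inr (Or.inr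
                ⟨⟨L - 1, by omega⟩, by simp, rfl, by omega⟩)⟩)⟩
end

section
/- Consider the set-cover gadget graph for an instance (U, 𝒮) with |U| = m and parameter L ≥ 1, and let λ be any temporal labeling of the gadget graph. If the terminal r is temporally reachable from the element node t_j in the induced temporal graph, then there exists an index i ∈ [n] such that each of the L+1 chain edges {s_i, w_{i,1}}, {w_{i,1}, w_{i,2}}, …, {w_{i,L}, r} carries at least one label under λ, and moreover there exist timestamps τ₀ < τ₁ < ⋯ < τ_L with τ₀ ∈ λ({s_i, w_{i,1}}), τ_k ∈ λ({w_{i,k}, w_{i,k+1}}) for 1 ≤ k ≤ L−1, and τ_L ∈ λ({w_{i,L}, r}). -/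
section ChainAux

variable {n m L : ℕ}

/-- The `k`-th chain node of chain `i` (clamped). -/
def chainNode (hL : 1 ≤ L) (i : Fin n) (k : ℕ) : GV n m L :=
  GV.w i ⟨min k (L - 1), by omega⟩

lemma chainNode_eq' (hL : 1 ≤ L) (i : Fin n) (a : ℕ) (k : Fin L) (h : a = (k : ℕ))
    (ha : a ≤ L - 1) : (chainNode hL i a : GV n m L) = GV.w i k := by
  simp only [chainNode, GV.w.injEq, true_and, Fin.ext_iff]
  omega

/-- The `k`-th chain edge of chain `i`, for `0 ≤ k ≤ L`. -/
def chainEdge (hL : 1 ≤ L) (i : Fin n) (k : ℕ) : Sym2 (GV n m L) :=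
  if k = 0 then s(GV.s i, chainNode hL i 0)
  else if k ≤ L - 1 then s(chainNode hL i (k - 1), chainNode hL i k)
  else s(chainNode hL i (L - 1), GV.r)

lemma chainEdge_zero' (hL : 1 ≤ L) (i : Fin n) (k : Fin L) (h : (k : ℕ) = 0) :
    (chainEdge hL i 0 : Sym2 (GV n m L)) = s(GV.s i, GV.w i k) := by
  rw [chainEdge, if_pos rfl, chainNode_eq' hL i 0 k h.symm (by omega)]

lemma chainEdge_step (hL : 1 ≤ L) (i : Fin n) (k k' : Fin L)
    (h : (k' : ℕ) = (k : ℕ) + 1) :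
    (chainEdge hL i (k' : ℕ) : Sym2 (GV n m L)) = s(GV.w i k, GV.w i k') := by
  have h1 := k'.isLt
  rw [chainEdge, if_neg (by omega), if_pos (by omega),
    chainNode_eq' hL i _ k (by omega) (by omega),
    chainNode_eq' hL i _ k' rfl (by omega)]

lemma chainEdge_last' (hL : 1 ≤ L) (i : Fin n) (k : Fin L) (h : (k : ℕ) = L - 1) :
    (chainEdge hL i L : Sym2 (GV n m L)) = s(GV.w i k, GV.r) := by
  rw [chainEdge, if_neg (by omega), if_neg (by omega),
    chainNode_eq' hL i (L - 1) k h.symm (by omega)]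

/-- A strictly increasing labeling of a prefix of chain `i`, with last time `≤ B`. -/
def PartialChain (lab : Sym2 (GV n m L) → Finset ℕ) (hL : 1 ≤ L) (i : Fin n)
    (k B : ℕ) : Prop :=
  ∃ τ : ℕ → ℕ, (∀ a b, a < b → b ≤ k → τ a < τ b) ∧
    (∀ l ≤ k, τ l ∈ lab (chainEdge hL i l)) ∧ τ k ≤ B

lemma partial_extend {lab : Sym2 (GV n m L) → Finset ℕ} {hL : 1 ≤ L} {i : Fin n}
    {k B t : ℕ} (h : PartialChain lab hL i k B) (hBt : B < t)
    (ht : t ∈ lab (chainEdge hL i (k + 1))) : PartialChain lab hL i (k + 1) t := by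
  obtain ⟨τ, hm, hmem, hb⟩ := h
  refine ⟨fun l => if l ≤ k then τ l else t, ?_, ?_, ?_⟩
  · intro a b hab hbk
    by_cases hbk' : b ≤ k
    · simp only [if_pos (show a ≤ k by omega), if_pos hbk']
      exact hm a b hab hbk'
    · have ha : a ≤ k := by omega
      simp only [if_pos ha, if_neg hbk']
      have hak : τ a ≤ τ k := by
        rcases Nat.lt_or_ge a k with h' | h'
        · exact le_of_lt (hm a k h' le_rfl)
        · have : a = k := by omega
          simp [this]
      omega
  · intro l hl
    by_cases hlk : l ≤ k
    · simpa [if_pos hlk] using hmem l hlk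
    · have hl' : l = k + 1 := by omega
      subst hl'
      simpa [if_neg (show ¬ (k + 1 ≤ k) by omega)] using ht
  · simp [if_neg (show ¬ (k + 1 ≤ k) by omega)]

lemma partial_down {lab : Sym2 (GV n m L) → Finset ℕ} {hL : 1 ≤ L} {i : Fin n}
    {k B B' : ℕ} (h : PartialChain lab hL i (k + 1) B) (hBB : B ≤ B') :
    PartialChain lab hL i k B' := by
  obtain ⟨τ, hm, hmem, hb⟩ := h
  refine ⟨τ, fun a b hab hbk => hm a b hab (by omega), fun l hl => hmem l (by omega), ?_⟩
  have := hm k (k + 1) (by omega) le_rfl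
  omega

lemma reach_aux (hL : 1 ≤ L) (S : Fin n → Finset (Fin m))
    (lab : Sym2 (GV n m L) → Finset ℕ) (p : ℕ) (hp : 1 ≤ p)
    (vtx' : ℕ → GV n m L) (ts' : ℕ → ℕ) (j : Fin m)
    (h0 : vtx' 0 = GV.t j) (hpe : vtx' p = GV.r)
    (hmono : ∀ a b, a < b → b < p → ts' a < ts' b)
    (hedge : ∀ q, q < p → s(vtx' q, vtx' (q + 1)) ∈ gadgetEdges n m L S ∧
      ts' q ∈ lab s(vtx' q, vtx' (q + 1))) :
    ∃ i B, PartialChain lab hL i L B := by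
  have key : ∀ q, q ≤ p →
      ((∃ i B, PartialChain lab hL i L B) ∨
      (∃ (i : Fin n) (k : Fin L) (e : ℕ), e + 1 = q ∧ vtx' q = GV.w i k ∧
        PartialChain lab hL i (k : ℕ) (ts' e)) ∨
      (∃ j' : Fin m, vtx' q = GV.t j') ∨
      (∃ i' : Fin n, vtx' q = GV.s i')) := by
    intro q
    induction q with
    | zero => exact fun _ => Or.inr (Or.inr (Or.inl ⟨j, h0⟩))
    | succ q ih =>
      intro hq
      obtain ⟨hg, hlab⟩ := hedge q (by omega)
      have IH := ih (by omega)
      simp only [gadgetEdges, Set.mem_setOf_eq] at hg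
      rcases hg with ⟨i0, j0, hj, he⟩ | ⟨i0, k0, hk0, he⟩ |
        ⟨i0, k0, k0', hkk, he⟩ | ⟨i0, k0, hk0, he⟩
      · rw [Sym2.eq_iff] at he
        rcases he with ⟨hx, hy⟩ | ⟨hx, hy⟩
        · exact Or.inr (Or.inr (Or.inr ⟨i0, hy⟩))
        · exact Or.inr (Or.inr (Or.inl ⟨j0, hy⟩))
      · rw [Sym2.eq_iff] at he
        rcases he with ⟨hx, hy⟩ | ⟨hx, hy⟩
        · refine Or.inr (Or.inl ⟨i0, k0, q, rfl, hy, ?_⟩)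
          rw [hx, hy] at hlab
          rw [hk0]
          refine ⟨fun _ => ts' q, by intro a b hab hb; omega, ?_, le_rfl⟩
          intro l hl
          have hl0 : l = 0 := by omega
          subst hl0
          rw [chainEdge_zero' hL i0 k0 hk0]
          exact hlab
        · exact Or.inr (Or.inr (Or.inr ⟨i0, hy⟩))
      · rw [Sym2.eq_iff] at he
        rcases he with ⟨hx, hy⟩ | ⟨hx, hy⟩
        · -- forward step along the chain
          rcases IH with hA | ⟨i1, k1, e, hee, hw, hPC⟩ | ⟨j1, hc⟩ | ⟨i1, hc⟩
          · exact Or.inl hA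
          · rw [hx] at hw
            injection hw with h1 h2
            subst h1; subst h2
            refine Or.inr (Or.inl ⟨i0, k0', q, rfl, hy, ?_⟩)
            have hlt : ts' e < ts' q := hmono e q (by omega) (by omega)
            rw [hx, hy] at hlab
            have hmem' : ts' q ∈ lab (chainEdge hL i0 (k0' : ℕ)) := by
              rw [chainEdge_step hL i0 k0 k0' hkk]; exact hlab
            rw [hkk] at hmem'
            rw [hkk]
            exact partial_extend hPC hlt hmem'
          · rw [hx] at hc; simp at hc
          · rw [hx] at hc; simp at hc
        · -- backward step along the chain
          rcases IH with hA | ⟨i1, k1, e, hee, hw, hPC⟩ | ⟨j1, hc⟩ | ⟨i1, hc⟩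
          · exact Or.inl hA
          · rw [hx] at hw
            injection hw with h1 h2
            subst h1; subst h2
            refine Or.inr (Or.inl ⟨i0, k0, q, rfl, hy, ?_⟩)
            rw [hkk] at hPC
            exact partial_down hPC (le_of_lt (hmono e q (by omega) (by omega)))
          · rw [hx] at hc; simp at hc
          · rw [hx] at hc; simp at hc
      · rw [Sym2.eq_iff] at he
        rcases he with ⟨hx, hy⟩ | ⟨hx, hy⟩
        · -- step from w i (L-1) to r
          rcases IH with hA | ⟨i1, k1, e, hee, hw, hPC⟩ | ⟨j1, hc⟩ | ⟨i1, hc⟩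
          · exact Or.inl hA
          · rw [hx] at hw
            injection hw with h1 h2
            subst h1; subst h2
            rw [hk0] at hPC
            have hlt : ts' e < ts' q := hmono e q (by omega) (by omega)
            rw [hx, hy] at hlab
            have hmem' : ts' q ∈ lab (chainEdge hL i0 (L - 1 + 1)) := by
              rw [show L - 1 + 1 = L by omega, chainEdge_last' hL i0 k0 hk0]
              exact hlab
            have hfull := partial_extend hPC hlt hmem'
            rw [show L - 1 + 1 = L by omega] at hfull
            exact Or.inl ⟨i0, ts' q, hfull⟩
          · rw [hx] at hc; simp at hc
          · rw [hx] at hc; simp at hc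
        · -- step from r back to some w
          rcases IH with hA | ⟨i1, k1, e, hee, hw, hPC⟩ | ⟨j1, hc⟩ | ⟨i1, hc⟩
          · exact Or.inl hA
          · rw [hx] at hw; simp at hw
          · rw [hx] at hc; simp at hc
          · rw [hx] at hc; simp at hc
  rcases key p le_rfl with hA | ⟨i1, k1, e, hee, hw, hPC⟩ | ⟨j1, hw⟩ | ⟨i1, hw⟩
  · exact hA
  · rw [hpe] at hw; simp at hw
  · rw [hpe] at hw; simp at hw
  · rw [hpe] at hw; simp at hw

end ChainAux

/-- for any temporal labeling `lab` of the gadget graph, if the terminal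
`r` is temporally reachable from the element node `t j`, then some chain is fully
labeled: there is `i ∈ [n]` such that each of the `L+1` chain edges
`{s_i, w_{i,1}}, {w_{i,1}, w_{i,2}}, …, {w_{i,L}, r}` carries at least one label, and
moreover there are timestamps `τ₀ < τ₁ < ⋯ < τ_L` with `τ₀ ∈ λ({s_i, w_{i,1}})`,
`τ_k ∈ λ({w_{i,k}, w_{i,k+1}})` for `1 ≤ k ≤ L-1`, and `τ_L ∈ λ({w_{i,L}, r})`. -/
theorem reach_forces_full_chain (n m L : ℕ) (hL : 1 ≤ L)
    (S : Fin n → Finset (Fin m)) (hcover : ∀ j, ∃ i, j ∈ S i)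
    (lab : Sym2 (GV n m L) → Finset ℕ) (j : Fin m)
    (hreach : TemporallyReachable (inducedTemporal (gadgetEdges n m L S) lab)
      (GV.t j) GV.r) :
    ∃ i : Fin n,
      ((lab s(GV.s i, GV.w i ⟨0, by omega⟩)).Nonempty ∧
       (∀ (k : ℕ) (_h1 : 1 ≤ k) (_h2 : k ≤ L - 1),
         (lab s(GV.w i ⟨k - 1, by omega⟩, GV.w i ⟨k, by omega⟩)).Nonempty) ∧
       (lab s(GV.w i ⟨L - 1, by omega⟩, GV.r)).Nonempty) ∧
      ∃ τ : Fin (L + 1) → ℕ, StrictMono τ ∧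
        τ 0 ∈ lab s(GV.s i, GV.w i ⟨0, by omega⟩) ∧
        (∀ (k : ℕ) (_h1 : 1 ≤ k) (_h2 : k ≤ L - 1),
          τ ⟨k, by omega⟩ ∈ lab s(GV.w i ⟨k - 1, by omega⟩, GV.w i ⟨k, by omega⟩)) ∧
        τ ⟨L, by omega⟩ ∈ lab s(GV.w i ⟨L - 1, by omega⟩, GV.r) := by
  rcases hreach with heq | ⟨p, vtx, ts, hpath⟩
  · exact absurd heq (by simp)
  obtain ⟨h0, hend, htm, hE⟩ := hpath
  have hp : 1 ≤ p := by
    rcases Nat.eq_zero_or_pos p with h | h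
    · subst h
      have h2 : (GV.t j : GV n m L) = GV.r := by rw [← h0]; exact hend
      exact absurd h2 (by simp)
    · exact h
  have key := reach_aux hL S lab p hp (fun q => vtx ⟨min q p, by omega⟩)
      (fun l => ts ⟨min l (p - 1), by omega⟩) j ?_ ?_ ?_ ?_
  · obtain ⟨i, B, τ, hm, hmem, -⟩ := key
    have hcz : (chainEdge hL i 0 : Sym2 (GV n m L)) = s(GV.s i, GV.w i ⟨0, by omega⟩) :=
      chainEdge_zero' hL i ⟨0, by omega⟩ rfl
    have hcl : (chainEdge hL i L : Sym2 (GV n m L)) = s(GV.w i ⟨L - 1, by omega⟩, GV.r) :=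
      chainEdge_last' hL i ⟨L - 1, by omega⟩ rfl
    have hcm : ∀ (k : ℕ) (hk1 : 1 ≤ k) (hk2 : k ≤ L - 1),
        (chainEdge hL i k : Sym2 (GV n m L)) = s(GV.w i ⟨k - 1, by omega⟩, GV.w i ⟨k, by omega⟩) := by
      intro k h1 h2
      rw [chainEdge, if_neg (by omega), if_pos h2,
        chainNode_eq' hL i (k - 1) ⟨k - 1, by omega⟩ rfl (by omega),
        chainNode_eq' hL i k ⟨k, by omega⟩ rfl (by omega)]
    refine ⟨i, ⟨⟨τ 0, hcz ▸ hmem 0 (by omega)⟩, ?_, ⟨τ L, hcl ▸ hmem L le_rfl⟩⟩,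
      fun k => τ (k : ℕ), ?_, hcz ▸ hmem 0 (by omega), ?_, hcl ▸ hmem L le_rfl⟩
    · intro k h1 h2
      exact ⟨τ k, (hcm k h1 h2) ▸ hmem k (by omega)⟩
    · intro a b hab
      exact hm a.val b.val hab (Nat.lt_succ_iff.mp b.isLt)
    · intro k h1 h2
      exact (hcm k h1 h2) ▸ hmem k (by omega)
  · beta_reduce
    have e0 : (⟨min 0 p, by omega⟩ : Fin (p + 1)) = 0 := by
      apply Fin.ext; simp
    rw [e0]; exact h0
  · beta_reduce
    have ep : (⟨min p p, by omega⟩ : Fin (p + 1)) = Fin.last p := by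
      apply Fin.ext; simp
    rw [ep]; exact hend
  · intro a b hab hbp
    beta_reduce
    have ea : (⟨min a (p - 1), by omega⟩ : Fin p) = ⟨a, by omega⟩ := by
      apply Fin.ext; simp; omega
    have eb : (⟨min b (p - 1), by omega⟩ : Fin p) = ⟨b, by omega⟩ := by
      apply Fin.ext; simp; omega
    rw [ea, eb]
    exact htm (show (⟨a, by omega⟩ : Fin p) < ⟨b, by omega⟩ from hab)
  · intro q hq
    have h := hE ⟨q, hq⟩
    simp only [inducedTemporal, Set.mem_setOf_eq] at h
    have e1 : (⟨min q p, by omega⟩ : Fin (p + 1)) = Fin.castSucc ⟨q, hq⟩ := by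
      apply Fin.ext; simp; omega
    have e2 : (⟨min (q + 1) p, by omega⟩ : Fin (p + 1)) = Fin.succ ⟨q, hq⟩ := by
      apply Fin.ext; simp; omega
    have e3 : (⟨min q (p - 1), by omega⟩ : Fin p) = ⟨q, hq⟩ := by
      apply Fin.ext; simp; omega
    beta_reduce
    rw [e1, e2, e3]
    exact h
end
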